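/- Faithfulness of the aggregate rewriting: let Π be a program, A an aggregate of the form sum[w_1:l_1,...,w_n:l_n] ⊙ b with ⊙ ∈ {>,≠}, and V a set of atoms containing rec(Π,A) (the atoms in the strongly connected component of A in the positive dependency graph of Π). Then Π and rew(Π,A,V) are equivalent with respect to At(Π): they have equally many stable models, and the restrictions of their stable models to At(Π) coincide; in fact each stable model I of Π corresponds to the unique stable model ext(I,I) of rew(Π,A,V). -/

import Mathlib

noncomputable section
attribute [local instance] Classical.propDecidable

/-- Propositional literals: atoms under possibly nested negation as failure. -/
inductive Lit (V : Type) where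
  | pos : V → Lit V
  | neg : Lit V → Lit V

/-- Comparison operators of (normalized) sum aggregates. -/
inductive AggOp where
  | gt | ne

/-- A sum aggregate `sum[w₁:l₁,...,wₙ:lₙ] ⊙ b` with `⊙ ∈ {>, ≠}`. -/
structure Agg (V : Type) where
  n : ℕ
  w : Fin n → ℤ
  l : Fin n → Lit V
  op : AggOp
  b : ℤ

/-- Body literals: propositional literals or aggregates. -/
inductive BLit (V : Type) where
  | lit : Lit V → BLit V
  | agg : Agg V → BLit V

/-- A rule `p₁ ∨ ... ∨ pₘ ← l₁ ∧ ... ∧ lₙ`; the head collects the head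
    atoms different from ⊥ (so constraints have empty head). -/
structure Rule (V : Type) where
  head : Finset V
  body : List (BLit V)

abbrev Program (V : Type) := Set (Rule V)

variable {V : Type}

def satLit (I : Set V) : Lit V → Prop
  | .pos p => p ∈ I
  | .neg l => ¬ satLit I l

/-- Satisfaction of the reduct `F(I,l)` by `J`: negative literals are fixed
    by `I`, positive ones are evaluated in `J`. -/
def satLitRed (I J : Set V) : Lit V → Prop
  | .pos p => p ∈ J
  | .neg l => ¬ satLit I l

def aggSum (A : Agg V) (sat : Lit V → Prop) : ℤ :=
  ∑ i ∈ Finset.univ.filter (fun i => sat (A.l i)), A.w i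

def satAggWith (A : Agg V) (sat : Lit V → Prop) : Prop :=
  match A.op with
  | .gt => aggSum A sat > A.b
  | .ne => aggSum A sat ≠ A.b

def satAgg (I : Set V) (A : Agg V) : Prop := satAggWith A (satLit I)

/-- `J ⊨ F(I,A)` for an aggregate `A`. -/
def satAggRed (I J : Set V) (A : Agg V) : Prop := satAggWith A (satLitRed I J)

def satB (I : Set V) : BLit V → Prop
  | .lit l => satLit I l
  | .agg A => satAgg I A

def satBRed (I J : Set V) : BLit V → Prop
  | .lit l => satLitRed I J l
  | .agg A => satAggRed I J A

def satBody (I : Set V) (r : Rule V) : Prop := ∀ bl ∈ r.body, satB I bl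

def satBodyRed (I J : Set V) (r : Rule V) : Prop := ∀ bl ∈ r.body, satBRed I J bl

def satRule (I : Set V) (r : Rule V) : Prop := satBody I r → ∃ p ∈ r.head, p ∈ I

/-- `I ⊨ Π`. -/
def satProg (I : Set V) (P : Program V) : Prop := ∀ r ∈ P, satRule I r

/-- `J ⊨ F(I,Π)`: the reduct keeps the rules whose bodies are true in `I`,
    fixing negative literals according to `I`. -/
def satRedProg (I J : Set V) (P : Program V) : Prop :=
  ∀ r ∈ P, satBody I r → satBodyRed I J r → ∃ p ∈ r.head, p ∈ J

/-- `I` is a stable model of `P`. -/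
def stable (P : Program V) (I : Set V) : Prop :=
  satProg I P ∧ ∀ J, J ⊂ I → ¬ satRedProg I J P

/-- The aggregates occurring in `P`. -/
def AgOf (P : Program V) : Set (Agg V) := {A | ∃ r ∈ P, BLit.agg A ∈ r.body}

/-- `Σ(l,A)`: the total weight of the literal `l` in `A`. -/
def wtL (A : Agg V) (l : Lit V) : ℤ :=
  ∑ i ∈ Finset.univ.filter (fun i => A.l i = l), A.w i

/-- The total weight of the atom `p` in `A`. -/
def wt (A : Agg V) (p : V) : ℤ := wtL A (Lit.pos p)

def atomsLit : Lit V → Set V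
  | .pos p => {p}
  | .neg l => atomsLit l

def atomsAgg (A : Agg V) : Set V := ⋃ i, atomsLit (A.l i)

def atomsB : BLit V → Set V
  | .lit l => atomsLit l
  | .agg A => atomsAgg A

/-- `At(P)`: the atoms occurring in `P`. -/
def atomsProg (P : Program V) : Set V :=
  {p | ∃ r ∈ P, p ∈ r.head ∨ ∃ bl ∈ r.body, p ∈ atomsB bl}

/-- Vertices of the positive dependency graph: atoms and aggregates. -/
abbrev Vtx (V : Type) := V ⊕ Agg V

/-- Arcs of the positive dependency graph `G_P`. -/
def arc (P : Program V) (u v : Vtx V) : Prop :=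
  (∃ r ∈ P, (∃ a, u = Sum.inl a ∧ a ∈ r.head) ∧
     ((∃ b, v = Sum.inl b ∧ BLit.lit (Lit.pos b) ∈ r.body) ∨
      (∃ A, v = Sum.inr A ∧ BLit.agg A ∈ r.body))) ∨
  (∃ A p, u = Sum.inr A ∧ v = Sum.inl p ∧ A ∈ AgOf P ∧
     ((A.op = AggOp.gt ∧ 0 < wt A p) ∨ (A.op = AggOp.ne ∧ wt A p ≠ 0)))

/-- Mutual reachability in `G_P`. -/
def mreach (P : Program V) (u v : Vtx V) : Prop :=
  Relation.ReflTransGen (arc P) u v ∧ Relation.ReflTransGen (arc P) v u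

/-- Vertices occurring in `P`. -/
def vertices (P : Program V) : Set (Vtx V) :=
  (Sum.inl '' atomsProg P) ∪ (Sum.inr '' AgOf P)

/-- Strongly connected components of `G_P` (components of `P`). -/
def isComponent (P : Program V) (C : Set (Vtx V)) : Prop :=
  ∃ u ∈ vertices P, C = {v ∈ vertices P | mreach P u v}

/-- `rec(Π,A)`: the atoms in the strongly connected component of `A` in the
    positive dependency graph of `Π` (empty when `A` does not occur in `Π`). -/
def recSet (P : Program V) (A : Agg V) : Set V :=
  {p | A ∈ AgOf P ∧ mreach P (Sum.inr A) (Sum.inl p)}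

/-- The distinct literals of `A` with nonzero total weight. -/
def litsNZ (A : Agg V) : Finset (Lit V) :=
  (Finset.univ.image A.l).filter (fun l => wtL A l ≠ 0)

/-- The transformation of an aggregated literal in rule (4):
    literals with positive total weight are kept; an atom `p ∈ V` with
    negative total weight becomes the fresh atom `p^F`; any other literal `l`
    with negative total weight becomes `∼l`. -/
def tLit (pF : V → V) (Vs : Set V) (A : Agg V) (l : Lit V) : Lit V :=
  if 0 < wtL A l then l
  else
    match l with
    | .pos p => if p ∈ Vs then .pos (pF p) else .neg (.pos p)
    | .neg m => .neg (.neg m)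

/-- The monotone aggregate in the body of rule (4):
    `sum(wlit⁺(A) ∪ [-w:p^F | (w:p)∈wlit⁻(A), p∈V] ∪ [-w:∼l | (w:l)∈wlit⁻(A), l∉V])
       > b - Σ_{(w:l)∈wlit⁻(A)} w`. -/
def rewAgg (pF : V → V) (Vs : Set V) (A : Agg V) : Agg V where
  n := (litsNZ A).card
  w := fun i => |wtL A ((litsNZ A).equivFin.symm i : Lit V)|
  l := fun i => tLit pF Vs A ((litsNZ A).equivFin.symm i : Lit V)
  op := AggOp.gt
  b := A.b - ∑ l ∈ (litsNZ A).filter (fun l => wtL A l < 0), wtL A l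

/-- `pos(A,V)` for an aggregate with comparison `>`:
    rule (4) together with rules (5)–(7) for every `p ∈ V` with negative
    total weight in `A`. -/
def posGt (aux : V) (pF : V → V) (Vs : Set V) (A : Agg V) : Program V :=
  {r | r = ⟨{aux}, [BLit.agg (rewAgg pF Vs A)]⟩ ∨
       ∃ p, p ∈ Vs ∧ wtL A (Lit.pos p) < 0 ∧
         (r = ⟨{pF p}, [BLit.lit (.neg (.pos p))]⟩ ∨
          r = ⟨{pF p}, [BLit.lit (.pos aux)]⟩ ∨
          r = ⟨{p, pF p}, [BLit.lit (.neg (.neg (.pos aux)))]⟩)}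

/-- `A_<`: the aggregate `sum[-w₁:l₁,...,-wₙ:lₙ] > -b`. -/
def negA (A : Agg V) : Agg V := ⟨A.n, fun i => -(A.w i), A.l, AggOp.gt, -A.b⟩

/-- `A_>`: the aggregate `sum[w₁:l₁,...,wₙ:lₙ] > b`. -/
def gtA (A : Agg V) : Agg V := ⟨A.n, A.w, A.l, AggOp.gt, A.b⟩

/-- `pos(A,V)`: for `⊙ = >` as in `posGt`; for `⊙ = ≠`,
    `pos(A_>,V) ∪ pos(A_<,V)`, both sharing the same fresh atom `aux`. -/
def posProg (aux : V) (pF : V → V) (Vs : Set V) (A : Agg V) : Program V :=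
  match A.op with
  | AggOp.gt => posGt aux pF Vs A
  | AggOp.ne => posGt aux pF Vs (gtA A) ∪ posGt aux pF Vs (negA A)

/-- Replace any occurrence of `A` in a body literal by the fresh atom `aux`. -/
def replB (aux : V) (A : Agg V) : BLit V → BLit V
  | .agg A' => if A' = A then .lit (.pos aux) else .agg A'
  | .lit l => .lit l

def replRule (aux : V) (A : Agg V) (r : Rule V) : Rule V :=
  ⟨r.head, r.body.map (replB aux A)⟩

/-- `rew(Π,A,V)`: the union of `pos(A,V)` and `Π` with every occurrence of
    `A` replaced by `aux`. -/
def rewProg (aux : V) (pF : V → V) (P : Program V) (A : Agg V) (Vs : Set V) :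
    Program V :=
  posProg aux pF Vs A ∪ (replRule aux A '' P)

/-- `At^F(A,V)`: the atoms `p` whose fresh copy `p^F` is introduced in
    `pos(A,V)`, i.e. such that `(p^F ← aux) ∈ pos(A,V)`. -/
def AtF (aux : V) (pF : V → V) (Vs : Set V) (A : Agg V) : Set V :=
  {p | (⟨{pF p}, [BLit.lit (.pos aux)]⟩ : Rule V) ∈ posProg aux pF Vs A}

/-- The extension `ext(J,I)` of `J ⊆ I` relative to `I`. -/
def extSet (aux : V) (pF : V → V) (Vs : Set V) (A : Agg V) (J I : Set V) :
    Set V :=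
  if ¬ satAgg I A then J ∪ pF '' {p ∈ AtF aux pF Vs A | p ∉ I}
  else if ¬ satAggRed I J A then J ∪ pF '' {p ∈ AtF aux pF Vs A | p ∉ J}
  else J ∪ {aux} ∪ pF '' AtF aux pF Vs A

/-! ### Group 1: basic lemmas -/

section Basic
variable {V : Type}

lemma atomsLit_finite (l : Lit V) : (atomsLit l).Finite := by
  induction l with
  | pos p => exact Set.finite_singleton p
  | neg l ih => exact ih

lemma atomsAgg_finite (B : Agg V) : (atomsAgg B).Finite :=
  Set.finite_iUnion (fun _ => atomsLit_finite _)

lemma atomsB_finite (bl : BLit V) : (atomsB bl).Finite := by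
  cases bl with
  | lit l => exact atomsLit_finite l
  | agg B => exact atomsAgg_finite B

lemma head_subset_atoms {P : Program V} {r : Rule V} (hr : r ∈ P) {q : V}
    (hq : q ∈ r.head) : q ∈ atomsProg P := ⟨r, hr, Or.inl hq⟩

lemma body_atoms_subset {P : Program V} {r : Rule V} (hr : r ∈ P) {bl : BLit V}
    (hbl : bl ∈ r.body) {q : V} (hq : q ∈ atomsB bl) : q ∈ atomsProg P :=
  ⟨r, hr, Or.inr ⟨bl, hbl, hq⟩⟩

lemma aggAtoms_subset {P : Program V} {B : Agg V} (hB : B ∈ AgOf P) :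
    atomsAgg B ⊆ atomsProg P := by
  obtain ⟨r, hr, hmem⟩ := hB
  exact fun q hq => body_atoms_subset hr hmem hq

lemma atomsProg_finite {P : Program V} (h : P.Finite) : (atomsProg P).Finite := by
  have hsub : atomsProg P ⊆ ⋃ r ∈ P, ((↑r.head : Set V) ∪ ⋃ bl ∈ r.body, atomsB bl) := by
    rintro p ⟨r, hr, hp⟩
    refine Set.mem_biUnion hr ?_
    rcases hp with h1 | ⟨bl, hbl, h2⟩
    · exact Or.inl h1
    · exact Or.inr (Set.mem_biUnion hbl h2)
  refine Set.Finite.subset ?_ hsub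
  exact h.biUnion (fun r _ => (r.head.finite_toSet).union
    ((r.body.finite_toSet).biUnion fun bl _ => atomsB_finite bl))

lemma satLit_congr {I K : Set V} {l : Lit V} (h : ∀ q ∈ atomsLit l, (q ∈ I ↔ q ∈ K)) :
    satLit I l ↔ satLit K l := by
  induction l with
  | pos p => simpa [satLit] using h p rfl
  | neg l ih => simp only [satLit]; exact not_congr (ih h)

lemma satLitRed_congr {I I' J J' : Set V} {l : Lit V}
    (h : ∀ q ∈ atomsLit l, (q ∈ I ↔ q ∈ I') ∧ (q ∈ J ↔ q ∈ J')) :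
    satLitRed I J l ↔ satLitRed I' J' l := by
  cases l with
  | pos p => simpa [satLitRed] using (h p rfl).2
  | neg l => simp only [satLitRed]; exact not_congr (satLit_congr (fun q hq => (h q hq).1))

lemma satLitRed_self {I : Set V} {l : Lit V} : satLitRed I I l ↔ satLit I l := by
  cases l with
  | pos p => exact Iff.rfl
  | neg l => exact Iff.rfl

lemma aggSum_congr {B : Agg V} {σ τ : Lit V → Prop} (h : ∀ i, σ (B.l i) ↔ τ (B.l i)) :
    aggSum B σ = aggSum B τ := by
  unfold aggSum
  refine Finset.sum_congr ?_ (fun _ _ => rfl)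
  exact Finset.filter_congr (fun i _ => by simpa using h i)

lemma satAggWith_congr {B : Agg V} {σ τ : Lit V → Prop} (h : ∀ i, σ (B.l i) ↔ τ (B.l i)) :
    satAggWith B σ ↔ satAggWith B τ := by
  have hs := aggSum_congr h
  unfold satAggWith
  cases B.op <;> rw [hs]

lemma satAgg_congr {I K : Set V} {B : Agg V} (h : ∀ q ∈ atomsAgg B, (q ∈ I ↔ q ∈ K)) :
    satAgg I B ↔ satAgg K B :=
  satAggWith_congr (fun i => satLit_congr (fun q hq => h q (Set.mem_iUnion.2 ⟨i, hq⟩)))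

lemma satAggRed_congr {I I' J J' : Set V} {B : Agg V}
    (h : ∀ q ∈ atomsAgg B, (q ∈ I ↔ q ∈ I') ∧ (q ∈ J ↔ q ∈ J')) :
    satAggRed I J B ↔ satAggRed I' J' B :=
  satAggWith_congr (fun i => satLitRed_congr (fun q hq => h q (Set.mem_iUnion.2 ⟨i, hq⟩)))

lemma satAggRed_self {I : Set V} {B : Agg V} : satAggRed I I B ↔ satAgg I B :=
  satAggWith_congr (fun _ => satLitRed_self)

lemma stable_subset_atoms {P : Program V} {I : Set V} (h : stable P I) :
    I ⊆ atomsProg P := by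
  intro q hq
  by_contra hq'
  refine h.2 (I \ {q}) ⟨Set.diff_subset, fun hsub => ?_⟩ ?_
  · exact ((hsub hq).2 rfl)
  · intro r hr hb _
    obtain ⟨p, hp, hpI⟩ := h.1 r hr hb
    refine ⟨p, hp, hpI, fun hpq => hq' ?_⟩
    have hpq' : p = q := hpq
    exact hpq' ▸ head_subset_atoms hr hp

end Basic

/-! ### Group 2: weights, litsNZ, rewritten aggregate sums -/

section Sums
variable {V : Type}

lemma mem_litsNZ {B : Agg V} {l : Lit V} :
    l ∈ litsNZ B ↔ (∃ i, B.l i = l) ∧ wtL B l ≠ 0 := by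
  simp [litsNZ]

lemma atomsLit_subset_of_mem {B : Agg V} {l : Lit V} (h : ∃ i, B.l i = l) :
    atomsLit l ⊆ atomsAgg B := by
  obtain ⟨i, rfl⟩ := h
  exact fun q hq => Set.mem_iUnion.2 ⟨i, hq⟩

lemma mem_atomsAgg_of_wt_ne {B : Agg V} {p : V} (h : wtL B (.pos p) ≠ 0) :
    p ∈ atomsAgg B := by
  obtain ⟨i, hi, _⟩ := Finset.exists_ne_zero_of_sum_ne_zero h
  simp only [Finset.mem_filter] at hi
  exact Set.mem_iUnion.2 ⟨i, by rw [hi.2]; rfl⟩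

/-- fiber-closed sums regroup as sums of total weights over the image -/
lemma sum_fiber {B : Agg V} (D : Finset (Fin B.n))
    (hD : ∀ i ∈ D, ∀ i', B.l i' = B.l i → i' ∈ D) :
    ∑ i ∈ D, B.w i = ∑ l ∈ D.image B.l, wtL B l := by
  rw [← Finset.sum_fiberwise_of_maps_to (g := B.l) (t := D.image B.l)
        (fun i hi => Finset.mem_image_of_mem _ hi)]
  refine Finset.sum_congr rfl (fun l hl => ?_)
  obtain ⟨i0, hi0, rfl⟩ := Finset.mem_image.1 hl
  unfold wtL
  refine Finset.sum_congr ?_ (fun _ _ => rfl)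
  ext i'
  simp only [Finset.mem_filter, Finset.mem_univ, true_and]
  exact ⟨fun h => h.2, fun h => ⟨hD i0 hi0 i' h, h⟩⟩

lemma aggSum_eq_litsNZ (B : Agg V) (τ : Lit V → Prop) :
    aggSum B τ = ∑ l ∈ (litsNZ B).filter (fun l => τ l), wtL B l := by
  unfold aggSum
  rw [sum_fiber (B := B) _ (fun i hi i' h => by
    simp only [Finset.mem_filter, Finset.mem_univ, true_and] at hi ⊢
    rw [h]; exact hi)]
  have himg : (Finset.univ.filter (fun i => τ (B.l i))).image B.l
      = (Finset.univ.image B.l).filter (fun l => τ l) := by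
    ext l
    simp only [Finset.mem_image, Finset.mem_filter, Finset.mem_univ, true_and]
    constructor
    · rintro ⟨i, hi, rfl⟩; exact ⟨⟨i, rfl⟩, hi⟩
    · rintro ⟨⟨i, rfl⟩, hl⟩; exact ⟨i, hl, rfl⟩
  rw [himg]
  refine (Finset.sum_subset ?_ ?_).symm
  · intro l hl
    simp only [litsNZ, Finset.mem_filter] at hl ⊢
    exact ⟨hl.1.1, hl.2⟩
  · intro l hl hl'
    simp only [litsNZ, Finset.mem_filter] at hl hl'
    by_contra hne
    exact hl' ⟨⟨hl.1, fun h0 => hne (by rw [h0])⟩, hl.2⟩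

/-- positive part of the weighted sum -/
def PS (B : Agg V) (σ : Lit V → Prop) : ℤ :=
  ∑ l ∈ (litsNZ B).filter (fun l => 0 < wtL B l ∧ σ l), wtL B l

/-- negative part, over a condition -/
def NS (B : Agg V) (C : Lit V → Prop) : ℤ :=
  ∑ l ∈ (litsNZ B).filter (fun l => wtL B l < 0 ∧ C l), wtL B l

lemma aggSum_split (B : Agg V) (τ : Lit V → Prop) :
    aggSum B τ = PS B τ + NS B τ := by
  rw [aggSum_eq_litsNZ]
  unfold PS NS
  rw [← Finset.sum_filter_add_sum_filter_not ((litsNZ B).filter (fun l => τ l))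
        (fun l => 0 < wtL B l)]
  congr 1
  · rw [Finset.filter_filter]
    refine Finset.sum_congr (Finset.filter_congr (fun l _ => by tauto)) (fun _ _ => rfl)
  · rw [Finset.filter_filter]
    refine Finset.sum_congr ?_ (fun _ _ => rfl)
    refine Finset.filter_congr (fun l hl => ?_)
    have := (mem_litsNZ.1 hl).2
    constructor
    · rintro ⟨h1, h2⟩; exact ⟨lt_of_le_of_ne (not_lt.1 h2) this, h1⟩
    · rintro ⟨h1, h2⟩; exact ⟨h2, not_lt.2 (le_of_lt h1)⟩

lemma NS_le {B : Agg V} {C₁ C₂ : Lit V → Prop}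
    (h : ∀ l ∈ litsNZ B, wtL B l < 0 → C₁ l → C₂ l) : NS B C₂ ≤ NS B C₁ := by
  have hsub : (litsNZ B).filter (fun l => wtL B l < 0 ∧ C₁ l)
      ⊆ (litsNZ B).filter (fun l => wtL B l < 0 ∧ C₂ l) := by
    intro l hl
    simp only [Finset.mem_filter] at hl ⊢
    exact ⟨hl.1, hl.2.1, h l hl.1 hl.2.1 hl.2.2⟩
  unfold NS
  rw [← Finset.sum_sdiff hsub]
  have : ∑ l ∈ ((litsNZ B).filter (fun l => wtL B l < 0 ∧ C₂ l) \
      (litsNZ B).filter (fun l => wtL B l < 0 ∧ C₁ l)), wtL B l ≤ 0 := by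
    refine Finset.sum_nonpos (fun l hl => ?_)
    have := (Finset.mem_sdiff.1 hl).1
    simp only [Finset.mem_filter] at this
    exact le_of_lt this.2.1
  linarith

lemma PS_congr {B : Agg V} {σ τ : Lit V → Prop}
    (h : ∀ l ∈ litsNZ B, 0 < wtL B l → (σ l ↔ τ l)) : PS B σ = PS B τ := by
  refine Finset.sum_congr (Finset.filter_congr (fun l hl => ?_)) (fun _ _ => rfl)
  exact and_congr_right (fun h1 => h l hl h1)

lemma NS_congr {B : Agg V} {C₁ C₂ : Lit V → Prop}
    (h : ∀ l ∈ litsNZ B, wtL B l < 0 → (C₁ l ↔ C₂ l)) : NS B C₁ = NS B C₂ := by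
  refine Finset.sum_congr (Finset.filter_congr (fun l hl => ?_)) (fun _ _ => rfl)
  exact and_congr_right (fun h1 => h l hl h1)

end Sums

/-! ### Group 3: the rewritten aggregate -/

section Rew
variable {V : Type} {pF : V → V} {Vs : Set V}

lemma tLit_pos {B : Agg V} {l : Lit V} (h : 0 < wtL B l) : tLit pF Vs B l = l := by
  unfold tLit; rw [if_pos h]

lemma tLit_posVs {B : Agg V} {p : V} (h : ¬ 0 < wtL B (.pos p)) (hp : p ∈ Vs) :
    tLit pF Vs B (.pos p) = .pos (pF p) := by
  unfold tLit; rw [if_neg h]; simp [hp]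

lemma tLit_posNVs {B : Agg V} {p : V} (h : ¬ 0 < wtL B (.pos p)) (hp : p ∉ Vs) :
    tLit pF Vs B (.pos p) = .neg (.pos p) := by
  unfold tLit; rw [if_neg h]; simp [hp]

lemma tLit_neg {B : Agg V} {m : Lit V} (h : ¬ 0 < wtL B (.neg m)) :
    tLit pF Vs B (.neg m) = .neg (.neg m) := by
  unfold tLit; rw [if_neg h]

lemma tLit_shape {B : Agg V} {l : Lit V} (hl : l ∈ litsNZ B) {x : V}
    (ht : tLit pF Vs B l = .pos x) :
    (0 < wtL B l ∧ l = .pos x) ∨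
      (wtL B l < 0 ∧ ∃ p, p ∈ Vs ∧ l = .pos p ∧ x = pF p) := by
  have hw : wtL B l ≠ 0 := (mem_litsNZ.1 hl).2
  by_cases h0 : 0 < wtL B l
  · rw [tLit_pos h0] at ht; exact Or.inl ⟨h0, ht⟩
  · have hneg : wtL B l < 0 := lt_of_le_of_ne (not_lt.1 h0) hw
    cases l with
    | pos p =>
        by_cases hp : p ∈ Vs
        · rw [tLit_posVs h0 hp] at ht
          exact Or.inr ⟨hneg, p, hp, rfl, (Lit.pos.inj ht).symm⟩
        · rw [tLit_posNVs h0 hp] at ht; exact absurd ht (by simp)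
    | neg m => rw [tLit_neg h0] at ht; exact absurd ht (by simp)

lemma aggSum_rewAgg (B : Agg V) (σ : Lit V → Prop) :
    aggSum (rewAgg pF Vs B) σ =
      ∑ l ∈ (litsNZ B).filter (fun l => σ (tLit pF Vs B l)), |wtL B l| := by
  unfold aggSum
  calc ∑ i ∈ Finset.univ.filter (fun i => σ ((rewAgg pF Vs B).l i)), (rewAgg pF Vs B).w i
      = ∑ i : Fin (litsNZ B).card,
          if σ (tLit pF Vs B ((litsNZ B).equivFin.symm i : Lit V)) then
            |wtL B ((litsNZ B).equivFin.symm i : Lit V)| else 0 :=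
        Finset.sum_filter _ _
    _ = ∑ x : {l // l ∈ litsNZ B},
          if σ (tLit pF Vs B (x : Lit V)) then |wtL B (x : Lit V)| else 0 :=
        Fintype.sum_equiv (litsNZ B).equivFin.symm _ _ (fun x => rfl)
    _ = ∑ l ∈ litsNZ B, if σ (tLit pF Vs B l) then |wtL B l| else 0 :=
        Finset.sum_coe_sort (litsNZ B) (fun l => if σ (tLit pF Vs B l) then |wtL B l| else 0)
    _ = ∑ l ∈ (litsNZ B).filter (fun l => σ (tLit pF Vs B l)), |wtL B l| :=
        (Finset.sum_filter _ _).symm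

lemma wt_rew_ne_zero {B : Agg V} {x : V} (h : wtL (rewAgg pF Vs B) (.pos x) ≠ 0) :
    ∃ l ∈ litsNZ B, tLit pF Vs B l = .pos x := by
  obtain ⟨i, hi, _⟩ := Finset.exists_ne_zero_of_sum_ne_zero h
  simp only [Finset.mem_filter, Finset.mem_univ, true_and] at hi
  exact ⟨((litsNZ B).equivFin.symm i : Lit V), Finset.coe_mem _, hi⟩

lemma rewAgg_op (B : Agg V) : (rewAgg pF Vs B).op = AggOp.gt := rfl

lemma atomsLit_tLit {B : Agg V} {l : Lit V} (hl : l ∈ litsNZ B) {q : V}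
    (hq : q ∈ atomsLit (tLit pF Vs B l)) :
    (q ∈ atomsAgg B) ∨ ∃ p, p ∈ Vs ∧ wtL B (.pos p) < 0 ∧ q = pF p := by
  have hsub : atomsLit l ⊆ atomsAgg B := atomsLit_subset_of_mem (mem_litsNZ.1 hl).1
  have hwne : wtL B l ≠ 0 := (mem_litsNZ.1 hl).2
  by_cases h0 : 0 < wtL B l
  · rw [tLit_pos h0] at hq; exact Or.inl (hsub hq)
  · have hneg : wtL B l < 0 := lt_of_le_of_ne (not_lt.1 h0) hwne
    cases l with
    | pos p =>
        by_cases hp : p ∈ Vs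
        · rw [tLit_posVs h0 hp] at hq
          exact Or.inr ⟨p, hp, hneg, hq⟩
        · rw [tLit_posNVs h0 hp] at hq
          exact Or.inl (hsub hq)
    | neg m => rw [tLit_neg h0] at hq; exact Or.inl (hsub hq)

lemma atomsAgg_rewAgg (B : Agg V) {q : V} (hq : q ∈ atomsAgg (rewAgg pF Vs B)) :
    (q ∈ atomsAgg B) ∨ ∃ p, p ∈ Vs ∧ wtL B (.pos p) < 0 ∧ q = pF p := by
  obtain ⟨S, ⟨i, rfl⟩, hq⟩ := hq
  exact atomsLit_tLit (Finset.coe_mem _) hq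

/-- The key reformulation of satisfaction of the rewritten aggregate. -/
lemma satRew_iff (B : Agg V) (σ : Lit V → Prop) :
    satAggWith (rewAgg pF Vs B) σ ↔
      B.b < PS B σ + NS B (fun l => ¬ σ (tLit pF Vs B l)) := by
  have h1 : satAggWith (rewAgg pF Vs B) σ ↔
      (rewAgg pF Vs B).b < aggSum (rewAgg pF Vs B) σ := by
    unfold satAggWith; rw [rewAgg_op]
  have hb : (rewAgg pF Vs B).b
      = B.b - ∑ l ∈ (litsNZ B).filter (fun l => wtL B l < 0), wtL B l := rfl
  have hset1 : ((litsNZ B).filter (fun l => σ (tLit pF Vs B l))).filter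
        (fun l => 0 < wtL B l) = (litsNZ B).filter (fun l => 0 < wtL B l ∧ σ l) := by
    ext l
    simp only [Finset.mem_filter, and_assoc]
    constructor
    · rintro ⟨hl, hσ, hw⟩; rw [tLit_pos hw] at hσ; exact ⟨hl, hw, hσ⟩
    · rintro ⟨hl, hw, hσ⟩
      refine ⟨hl, ?_, hw⟩
      rw [tLit_pos hw]; exact hσ
  have hset2 : ((litsNZ B).filter (fun l => σ (tLit pF Vs B l))).filter
        (fun l => ¬ 0 < wtL B l)
      = (litsNZ B).filter (fun l => wtL B l < 0 ∧ σ (tLit pF Vs B l)) := by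
    ext l
    simp only [Finset.mem_filter, and_assoc]
    constructor
    · rintro ⟨hl, hσ, hw⟩
      exact ⟨hl, lt_of_le_of_ne (not_lt.1 hw) (mem_litsNZ.1 hl).2, hσ⟩
    · rintro ⟨hl, hw, hσ⟩; exact ⟨hl, hσ, not_lt.2 (le_of_lt hw)⟩
  have e1 : ∑ l ∈ (litsNZ B).filter (fun l => 0 < wtL B l ∧ σ l), |wtL B l|
      = PS B σ := by
    refine Finset.sum_congr rfl (fun l hl => ?_)
    simp only [Finset.mem_filter] at hl
    exact abs_of_pos hl.2.1
  have e2 : ∑ l ∈ (litsNZ B).filter (fun l => wtL B l < 0 ∧ σ (tLit pF Vs B l)), |wtL B l|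
      = - NS B (fun l => σ (tLit pF Vs B l)) := by
    unfold NS
    rw [← Finset.sum_neg_distrib]
    refine Finset.sum_congr rfl (fun l hl => ?_)
    simp only [Finset.mem_filter] at hl
    exact abs_of_neg hl.2.1
  have e3 : ∑ l ∈ (litsNZ B).filter (fun l => wtL B l < 0), wtL B l
      = NS B (fun l => σ (tLit pF Vs B l)) + NS B (fun l => ¬ σ (tLit pF Vs B l)) := by
    unfold NS
    have hA : ((litsNZ B).filter (fun l => wtL B l < 0)).filter
          (fun l => σ (tLit pF Vs B l))
        = (litsNZ B).filter (fun l => wtL B l < 0 ∧ σ (tLit pF Vs B l)) := by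
      ext l; simp [Finset.mem_filter, and_assoc]
    have hB : ((litsNZ B).filter (fun l => wtL B l < 0)).filter
          (fun l => ¬ σ (tLit pF Vs B l))
        = (litsNZ B).filter (fun l => wtL B l < 0 ∧ ¬ σ (tLit pF Vs B l)) := by
      ext l; simp [Finset.mem_filter, and_assoc]
    rw [← Finset.sum_filter_add_sum_filter_not ((litsNZ B).filter (fun l => wtL B l < 0))
      (fun l => σ (tLit pF Vs B l)), hA, hB]
    congr 1 <;>
    · refine Finset.sum_congr ?_ (fun _ _ => rfl)
      ext x; simp [Finset.mem_filter]
  have e0 : aggSum (rewAgg pF Vs B) σ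
      = PS B σ - NS B (fun l => σ (tLit pF Vs B l)) := by
    rw [aggSum_rewAgg]
    rw [← Finset.sum_filter_add_sum_filter_not
      ((litsNZ B).filter (fun l => σ (tLit pF Vs B l))) (fun l => 0 < wtL B l)]
    rw [hset1, hset2, e1, e2]
    ring
  rw [h1, hb, e0, e3]
  constructor <;> intro h <;> linarith

end Rew

/-! ### Group 4: comparison lemmas and variants -/

section Var
variable {V : Type} {pF : V → V} {Vs : Set V}

lemma aggSum_le_rewSum {B : Agg V} {σ τ : Lit V → Prop}
    (hp : ∀ l ∈ litsNZ B, 0 < wtL B l → (σ l ↔ τ l))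
    (hn : ∀ l ∈ litsNZ B, wtL B l < 0 → ¬ σ (tLit pF Vs B l) → τ l) :
    aggSum B τ ≤ PS B σ + NS B (fun l => ¬ σ (tLit pF Vs B l)) := by
  rw [aggSum_split]
  have h1 : PS B τ = PS B σ := PS_congr (fun l hl hw => (hp l hl hw).symm)
  have h2 : NS B τ ≤ NS B (fun l => ¬ σ (tLit pF Vs B l)) := NS_le hn
  linarith

lemma rewSum_le_aggSum {B : Agg V} {σ τ : Lit V → Prop}
    (hp : ∀ l ∈ litsNZ B, 0 < wtL B l → (σ l ↔ τ l))
    (hn : ∀ l ∈ litsNZ B, wtL B l < 0 → τ l → ¬ σ (tLit pF Vs B l)) :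
    PS B σ + NS B (fun l => ¬ σ (tLit pF Vs B l)) ≤ aggSum B τ := by
  rw [aggSum_split]
  have h1 : PS B τ = PS B σ := PS_congr (fun l hl hw => (hp l hl hw).symm)
  have h2 : NS B (fun l => ¬ σ (tLit pF Vs B l)) ≤ NS B τ := NS_le hn
  linarith

lemma gtA_of_gt {A : Agg V} (h : A.op = .gt) : gtA A = A := by
  obtain ⟨n, w, l, op, b⟩ := A
  simp only at h
  subst h
  rfl

/-- the list of `>`-variants of an aggregate -/
def varL (A : Agg V) : List (Agg V) :=
  match A.op with
  | .gt => [gtA A]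
  | .ne => [gtA A, negA A]

lemma aggSum_negA (A : Agg V) (σ : Lit V → Prop) :
    aggSum (negA A) σ = -aggSum A σ := by
  show (∑ i ∈ Finset.univ.filter (fun i => σ (A.l i)), -(A.w i)) = _
  rw [Finset.sum_neg_distrib]; rfl

lemma wtL_negA (A : Agg V) (l : Lit V) : wtL (negA A) l = -(wtL A l) := by
  show (∑ i ∈ Finset.univ.filter (fun i => A.l i = l), -(A.w i)) = _
  rw [Finset.sum_neg_distrib]; rfl

lemma mem_varL {A B : Agg V} (h : B ∈ varL A) :
    B = gtA A ∨ (A.op = .ne ∧ B = negA A) := by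
  unfold varL at h
  cases hop : A.op <;> rw [hop] at h <;> simp at h
  · exact Or.inl h
  · rcases h with h | h
    · exact Or.inl h
    · exact Or.inr ⟨rfl, h⟩

lemma gtA_mem_varL (A : Agg V) : gtA A ∈ varL A := by
  unfold varL
  cases hop : A.op <;> exact List.mem_cons_self

lemma atomsAgg_var {A B : Agg V} (h : B ∈ varL A) : atomsAgg B = atomsAgg A := by
  rcases mem_varL h with rfl | ⟨_, rfl⟩ <;> rfl

lemma wtL_var_ne {A B : Agg V} (h : B ∈ varL A) {l : Lit V} (hw : wtL B l ≠ 0) :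
    wtL A l ≠ 0 := by
  rcases mem_varL h with rfl | ⟨_, rfl⟩
  · exact hw
  · rw [wtL_negA] at hw; exact fun h0 => hw (by rw [h0, neg_zero])

lemma satAggWith_var (A : Agg V) (σ : Lit V → Prop) :
    satAggWith A σ ↔ ∃ B ∈ varL A, B.b < aggSum B σ := by
  cases hop : A.op
  case gt =>
    have h1 : satAggWith A σ ↔ A.b < aggSum A σ := by unfold satAggWith; rw [hop]
    have h2 : varL A = [gtA A] := by unfold varL; rw [hop]
    rw [h1, h2]
    constructor
    · intro h; exact ⟨gtA A, by simp, h⟩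
    · rintro ⟨B, hB, h⟩
      simp only [List.mem_singleton] at hB
      subst hB; exact h
  case ne =>
    have h1 : satAggWith A σ ↔ aggSum A σ ≠ A.b := by unfold satAggWith; rw [hop]
    have h2 : varL A = [gtA A, negA A] := by unfold varL; rw [hop]
    rw [h1, h2]
    have hn : (negA A).b = -A.b := rfl
    have hns : aggSum (negA A) σ = -aggSum A σ := aggSum_negA A σ
    constructor
    · intro h
      rcases lt_or_gt_of_ne h with h' | h'
      · exact ⟨negA A, by simp, by rw [hn, hns]; omega⟩
      · exact ⟨gtA A, by simp, h'⟩
    · rintro ⟨B, hB, h⟩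
      simp only [List.mem_cons, List.mem_singleton, List.not_mem_nil, or_false] at hB
      rcases hB with rfl | rfl
      · show aggSum A σ ≠ A.b
        have : A.b < aggSum A σ := h
        omega
      · rw [hn, hns] at h; omega

lemma not_satAggWith_var (A : Agg V) (σ : Lit V → Prop) :
    ¬ satAggWith A σ ↔ ∀ B ∈ varL A, aggSum B σ ≤ B.b := by
  rw [satAggWith_var]
  push_neg
  simp only [not_lt]

lemma posProg_var {aux : V} {A : Agg V} :
    posProg aux pF Vs A = {r | ∃ B ∈ varL A, r ∈ posGt aux pF Vs B} := by
  cases hop : A.op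
  case gt =>
    have h1 : posProg aux pF Vs A = posGt aux pF Vs A := by unfold posProg; rw [hop]
    have h2 : varL A = [gtA A] := by unfold varL; rw [hop]
    rw [h1, h2, gtA_of_gt hop]
    ext r; simp
  case ne =>
    have h1 : posProg aux pF Vs A
        = posGt aux pF Vs (gtA A) ∪ posGt aux pF Vs (negA A) := by
      unfold posProg; rw [hop]
    have h2 : varL A = [gtA A, negA A] := by unfold varL; rw [hop]
    rw [h1, h2]
    ext r; simp [Set.mem_union]

lemma mem_posGt {aux : V} {A : Agg V} {r : Rule V} :
    r ∈ posGt aux pF Vs A ↔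
      (r = ⟨{aux}, [BLit.agg (rewAgg pF Vs A)]⟩ ∨
       ∃ p, p ∈ Vs ∧ wtL A (Lit.pos p) < 0 ∧
         (r = ⟨{pF p}, [BLit.lit (.neg (.pos p))]⟩ ∨
          r = ⟨{pF p}, [BLit.lit (.pos aux)]⟩ ∨
          r = ⟨{p, pF p}, [BLit.lit (.neg (.neg (.pos aux)))]⟩)) := Iff.rfl

lemma mem_AtF {aux : V} {A : Agg V} {p : V} (hpFinj : Function.Injective pF) :
    p ∈ AtF aux pF Vs A ↔ ∃ B ∈ varL A, p ∈ Vs ∧ wtL B (Lit.pos p) < 0 := by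
  constructor
  · intro h
    have h' : (⟨{pF p}, [BLit.lit (.pos aux)]⟩ : Rule V) ∈ posProg aux pF Vs A := h
    rw [posProg_var] at h'
    obtain ⟨B, hB, hmem⟩ := h'
    refine ⟨B, hB, ?_⟩
    rcases mem_posGt.1 hmem with heq | ⟨p', hp', hw', heq⟩
    · exfalso
      have := congrArg Rule.body heq
      simp at this
    · rcases heq with heq | heq | heq
      · exfalso
        have := congrArg Rule.body heq
        simp at this
      · have hh := congrArg Rule.head heq
        simp only [Finset.singleton_inj] at hh
        have : p = p' := hpFinj hh
        subst this
        exact ⟨hp', hw'⟩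
      · exfalso
        have := congrArg Rule.body heq
        simp at this
  · rintro ⟨B, hB, hp, hw⟩
    show (⟨{pF p}, [BLit.lit (.pos aux)]⟩ : Rule V) ∈ posProg aux pF Vs A
    rw [posProg_var]
    exact ⟨B, hB, Or.inr ⟨p, hp, hw, Or.inr (Or.inl rfl)⟩⟩

lemma AtF_subset_atomsAgg {aux : V} {A : Agg V} (hpFinj : Function.Injective pF) :
    AtF aux pF Vs A ⊆ atomsAgg A := by
  intro p hp
  obtain ⟨B, hB, _, hw⟩ := (mem_AtF hpFinj).1 hp
  have := mem_atomsAgg_of_wt_ne (B := A) (wtL_var_ne hB (ne_of_lt hw))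
  exact this

end Var

/-! ### Group 5: structure of the rewritten program, transfer lemmas -/

section RewP
variable {V : Type} {aux : V} {pF : V → V} {P : Program V} {A : Agg V} {Vs : Set V}

lemma mem_rewProg {ρ : Rule V} :
    ρ ∈ rewProg aux pF P A Vs ↔
      (∃ B ∈ varL A, ρ ∈ posGt aux pF Vs B) ∨ (∃ r ∈ P, replRule aux A r = ρ) := by
  show ρ ∈ posProg aux pF Vs A ∪ _ ↔ _
  rw [Set.mem_union, posProg_var]
  exact Iff.rfl

lemma posGt_sub_rewProg {B : Agg V} (hB : B ∈ varL A) {ρ : Rule V}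
    (h : ρ ∈ posGt aux pF Vs B) : ρ ∈ rewProg aux pF P A Vs :=
  mem_rewProg.2 (Or.inl ⟨B, hB, h⟩)

lemma repl_sub_rewProg {r : Rule V} (hr : r ∈ P) :
    replRule aux A r ∈ rewProg aux pF P A Vs :=
  mem_rewProg.2 (Or.inr ⟨r, hr, rfl⟩)

lemma AgOf_rewProg {A' : Agg V} (h : A' ∈ AgOf (rewProg aux pF P A Vs)) :
    (∃ B ∈ varL A, A' = rewAgg pF Vs B) ∨ (A' ∈ AgOf P ∧ A' ≠ A) := by
  obtain ⟨ρ, hρ, hmem⟩ := h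
  rcases mem_rewProg.1 hρ with ⟨B, hB, hpos⟩ | ⟨r, hr, rfl⟩
  · rcases mem_posGt.1 hpos with rfl | ⟨p, _, _, (rfl | rfl | rfl)⟩
    · simp only [List.mem_singleton, BLit.agg.injEq] at hmem
      exact Or.inl ⟨B, hB, hmem⟩
    · simp at hmem
    · simp at hmem
    · simp at hmem
  · simp only [replRule, List.mem_map] at hmem
    obtain ⟨bl, hbl, hrepl⟩ := hmem
    cases bl with
    | lit l => simp [replB] at hrepl
    | agg A₂ =>
        by_cases hA₂ : A₂ = A
        · subst hA₂; simp [replB] at hrepl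
        · have hA' : A' = A₂ := by
            simp only [replB, if_neg hA₂, BLit.agg.injEq] at hrepl
            exact hrepl.symm
          subst hA'
          exact Or.inr ⟨⟨r, hr, hbl⟩, hA₂⟩

lemma atomsProg_rewProg (hpFinj : Function.Injective pF) {q : V}
    (hq : q ∈ atomsProg (rewProg aux pF P A Vs)) :
    q ∈ atomsProg P ∨ q ∈ atomsAgg A ∨ q = aux ∨ ∃ p ∈ AtF aux pF Vs A, q = pF p := by
  obtain ⟨ρ, hρ, hq⟩ := hq
  rcases mem_rewProg.1 hρ with ⟨B, hB, hpos⟩ | ⟨r, hr, rfl⟩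
  · have hVar : atomsAgg B = atomsAgg A := atomsAgg_var hB
    rcases mem_posGt.1 hpos with rfl | ⟨p, hp, hw, (rfl | rfl | rfl)⟩ <;>
      rcases hq with hh | ⟨bl, hbl, hab⟩
    · simp only [Finset.mem_singleton] at hh
      exact Or.inr (Or.inr (Or.inl hh))
    · simp only [List.mem_singleton] at hbl
      subst hbl
      rcases atomsAgg_rewAgg B hab with h1 | ⟨p', hp', hw', rfl⟩
      · exact Or.inr (Or.inl (hVar ▸ h1))
      · exact Or.inr (Or.inr (Or.inr ⟨p', (mem_AtF hpFinj).2 ⟨B, hB, hp', hw'⟩, rfl⟩))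
    · simp only [Finset.mem_singleton] at hh
      exact Or.inr (Or.inr (Or.inr ⟨p, (mem_AtF hpFinj).2 ⟨B, hB, hp, hw⟩, hh⟩))
    · simp only [List.mem_singleton] at hbl
      subst hbl
      have : q = p := hab
      subst this
      exact Or.inr (Or.inl (hVar ▸ mem_atomsAgg_of_wt_ne (ne_of_lt hw)))
    · simp only [Finset.mem_singleton] at hh
      exact Or.inr (Or.inr (Or.inr ⟨p, (mem_AtF hpFinj).2 ⟨B, hB, hp, hw⟩, hh⟩))
    · simp only [List.mem_singleton] at hbl
      subst hbl
      have : q = aux := hab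
      exact Or.inr (Or.inr (Or.inl this))
    · simp only [Finset.mem_insert, Finset.mem_singleton] at hh
      rcases hh with rfl | rfl
      · exact Or.inr (Or.inl (hVar ▸ mem_atomsAgg_of_wt_ne (ne_of_lt hw)))
      · exact Or.inr (Or.inr (Or.inr ⟨p, (mem_AtF hpFinj).2 ⟨B, hB, hp, hw⟩, rfl⟩))
    · simp only [List.mem_singleton] at hbl
      subst hbl
      have : q = aux := hab
      exact Or.inr (Or.inr (Or.inl this))
  · rcases hq with hh | ⟨bl', hbl', hab⟩
    · exact Or.inl (head_subset_atoms hr hh)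
    · simp only [replRule, List.mem_map] at hbl'
      obtain ⟨bl, hbl, rfl⟩ := hbl'
      cases bl with
      | lit l => exact Or.inl (body_atoms_subset hr hbl hab)
      | agg A₂ =>
          by_cases hA₂ : A₂ = A
          · subst hA₂
            have : q = aux := by simpa [replB, atomsB, atomsLit] using hab
            exact Or.inr (Or.inr (Or.inl this))
          · have : q ∈ atomsAgg A₂ := by simpa [replB, hA₂, atomsB] using hab
            exact Or.inl (body_atoms_subset hr hbl this)

lemma satBody_repl_fwd {r : Rule V} (hr : r ∈ P) {I₁ I₂ : Set V}
    (hag : ∀ q ∈ atomsProg P, (q ∈ I₁ ↔ q ∈ I₂))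
    (hA : BLit.agg A ∈ r.body → satAgg I₁ A → aux ∈ I₂)
    (h : satBody I₁ r) : satBody I₂ (replRule aux A r) := by
  intro bl' hbl'
  simp only [replRule, List.mem_map] at hbl'
  obtain ⟨bl, hbl, rfl⟩ := hbl'
  have hbs := h bl hbl
  cases bl with
  | lit l =>
      show satLit I₂ l
      exact (satLit_congr (fun q hq => hag q (body_atoms_subset hr hbl hq))).1 hbs
  | agg A₂ =>
      by_cases hAA : A₂ = A
      · subst hAA
        have he : replB aux A₂ (BLit.agg A₂) = BLit.lit (.pos aux) := by simp [replB]
        rw [he]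
        exact hA hbl hbs
      · have he : replB aux A (BLit.agg A₂) = BLit.agg A₂ := by simp [replB, hAA]
        rw [he]
        exact (satAgg_congr (fun q hq => hag q (body_atoms_subset hr hbl hq))).1 hbs

lemma satBody_repl_bwd {r : Rule V} (hr : r ∈ P) {I₁ I₂ : Set V}
    (hag : ∀ q ∈ atomsProg P, (q ∈ I₁ ↔ q ∈ I₂))
    (hA : BLit.agg A ∈ r.body → aux ∈ I₂ → satAgg I₁ A)
    (h : satBody I₂ (replRule aux A r)) : satBody I₁ r := by
  intro bl hbl
  have hbs := h (replB aux A bl) (by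
    simp only [replRule, List.mem_map]
    exact ⟨bl, hbl, rfl⟩)
  cases bl with
  | lit l =>
      show satLit I₁ l
      exact (satLit_congr (fun q hq => hag q (body_atoms_subset hr hbl hq))).2 hbs
  | agg A₂ =>
      by_cases hAA : A₂ = A
      · subst hAA
        have he : replB aux A₂ (BLit.agg A₂) = BLit.lit (.pos aux) := by simp [replB]
        rw [he] at hbs
        exact hA hbl hbs
      · have he : replB aux A (BLit.agg A₂) = BLit.agg A₂ := by simp [replB, hAA]
        rw [he] at hbs
        exact (satAgg_congr (fun q hq => hag q (body_atoms_subset hr hbl hq))).2 hbs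

lemma satBodyRed_repl_fwd {r : Rule V} (hr : r ∈ P) {I₁ I₂ J₁ J₂ : Set V}
    (hag : ∀ q ∈ atomsProg P, (q ∈ I₁ ↔ q ∈ I₂) ∧ (q ∈ J₁ ↔ q ∈ J₂))
    (hA : BLit.agg A ∈ r.body → satAggRed I₁ J₁ A → aux ∈ J₂)
    (h : satBodyRed I₁ J₁ r) : satBodyRed I₂ J₂ (replRule aux A r) := by
  intro bl' hbl'
  simp only [replRule, List.mem_map] at hbl'
  obtain ⟨bl, hbl, rfl⟩ := hbl'
  have hbs := h bl hbl
  cases bl with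
  | lit l =>
      show satLitRed I₂ J₂ l
      exact (satLitRed_congr (fun q hq => hag q (body_atoms_subset hr hbl hq))).1 hbs
  | agg A₂ =>
      by_cases hAA : A₂ = A
      · subst hAA
        have he : replB aux A₂ (BLit.agg A₂) = BLit.lit (.pos aux) := by simp [replB]
        rw [he]
        exact hA hbl hbs
      · have he : replB aux A (BLit.agg A₂) = BLit.agg A₂ := by simp [replB, hAA]
        rw [he]
        exact (satAggRed_congr (fun q hq => hag q (body_atoms_subset hr hbl hq))).1 hbs

lemma satBodyRed_repl_bwd {r : Rule V} (hr : r ∈ P) {I₁ I₂ J₁ J₂ : Set V}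
    (hag : ∀ q ∈ atomsProg P, (q ∈ I₁ ↔ q ∈ I₂) ∧ (q ∈ J₁ ↔ q ∈ J₂))
    (hA : BLit.agg A ∈ r.body → aux ∈ J₂ → satAggRed I₁ J₁ A)
    (h : satBodyRed I₂ J₂ (replRule aux A r)) : satBodyRed I₁ J₁ r := by
  intro bl hbl
  have hbs := h (replB aux A bl) (by
    simp only [replRule, List.mem_map]
    exact ⟨bl, hbl, rfl⟩)
  cases bl with
  | lit l =>
      show satLitRed I₁ J₁ l
      exact (satLitRed_congr (fun q hq => hag q (body_atoms_subset hr hbl hq))).2 hbs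
  | agg A₂ =>
      by_cases hAA : A₂ = A
      · subst hAA
        have he : replB aux A₂ (BLit.agg A₂) = BLit.lit (.pos aux) := by simp [replB]
        rw [he] at hbs
        exact hA hbl hbs
      · have he : replB aux A (BLit.agg A₂) = BLit.agg A₂ := by simp [replB, hAA]
        rw [he] at hbs
        exact (satAggRed_congr (fun q hq => hag q (body_atoms_subset hr hbl hq))).2 hbs

end RewP

/-! ### Group 6a: localization of countermodels -/

section Localize
variable {V : Type}

lemma agg_red_step {I J J₂ : Set V} {A' : Agg V} (hJJ : J ⊆ J₂)
    (h₂ : satAggRed I J₂ A') (h₁ : ¬ satAggRed I J A') :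
    ∃ p, p ∈ J₂ ∧ p ∉ J ∧
      ((A'.op = .gt ∧ 0 < wt A' p) ∨ (A'.op = .ne ∧ wt A' p ≠ 0)) := by
  classical
  by_contra hno
  have hmono : ∀ l, satLitRed I J l → satLitRed I J₂ l := by
    intro l
    cases l with
    | pos p => exact fun h => hJJ h
    | neg m => exact id
  have hsub : Finset.univ.filter (fun i => satLitRed I J (A'.l i))
      ⊆ Finset.univ.filter (fun i => satLitRed I J₂ (A'.l i)) := by
    intro i hi
    simp only [Finset.mem_filter, Finset.mem_univ, true_and] at hi ⊢
    exact hmono _ hi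
  have hdiff : aggSum A' (satLitRed I J₂) = aggSum A' (satLitRed I J)
      + ∑ i ∈ Finset.univ.filter (fun i => satLitRed I J₂ (A'.l i)) \
          Finset.univ.filter (fun i => satLitRed I J (A'.l i)), A'.w i := by
    unfold aggSum
    rw [← Finset.sum_sdiff hsub]
    ring
  set D := Finset.univ.filter (fun i => satLitRed I J₂ (A'.l i)) \
      Finset.univ.filter (fun i => satLitRed I J (A'.l i)) with hD
  have hDfib : ∀ i ∈ D, ∀ i', A'.l i' = A'.l i → i' ∈ D := by
    intro i hi i' he
    simp only [hD, Finset.mem_sdiff, Finset.mem_filter, Finset.mem_univ, true_and] at hi ⊢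
    rw [he]; exact hi
  have hsum := sum_fiber D hDfib
  have himg : ∀ l' ∈ D.image A'.l, ∃ p, l' = .pos p ∧ p ∈ J₂ ∧ p ∉ J := by
    intro l' hl'
    obtain ⟨i, hi, rfl⟩ := Finset.mem_image.1 hl'
    simp only [hD, Finset.mem_sdiff, Finset.mem_filter, Finset.mem_univ, true_and] at hi
    cases hL : A'.l i with
    | pos p =>
        rw [hL] at hi
        exact ⟨p, rfl, hi.1, hi.2⟩
    | neg m =>
        rw [hL] at hi
        exact absurd hi.1 hi.2
  cases hop : A'.op
  case gt =>
    have e : ∀ K : Set V, satAggRed I K A' ↔ A'.b < aggSum A' (satLitRed I K) := by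
      intro K; unfold satAggRed satAggWith; rw [hop]
    rw [e] at h₂ h₁
    have hle : ∑ i ∈ D, A'.w i ≤ 0 := by
      rw [hsum]
      refine Finset.sum_nonpos (fun l' hl' => ?_)
      obtain ⟨p, rfl, hp2, hp1⟩ := himg l' hl'
      by_contra hpos
      rw [not_le] at hpos
      exact hno ⟨p, hp2, hp1, Or.inl ⟨hop, hpos⟩⟩
    omega
  case ne =>
    have e : ∀ K : Set V, satAggRed I K A' ↔ aggSum A' (satLitRed I K) ≠ A'.b := by
      intro K; unfold satAggRed satAggWith; rw [hop]
    rw [e] at h₂ h₁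
    have heq : ∑ i ∈ D, A'.w i = 0 := by
      rw [hsum]
      refine Finset.sum_eq_zero (fun l' hl' => ?_)
      obtain ⟨p, rfl, hp2, hp1⟩ := himg l' hl'
      by_contra hne0
      exact hno ⟨p, hp2, hp1, Or.inr ⟨hop, hne0⟩⟩
    rw [not_ne_iff] at h₁
    exact h₂ (by omega)

lemma exists_min_reach {α : Type} {X : Set α} (hfin : X.Finite) (hne : X.Nonempty)
    (G : α → α → Prop) :
    ∃ x ∈ X, ∀ y ∈ X, Relation.ReflTransGen G x y → Relation.ReflTransGen G y x := by
  classical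
  obtain ⟨x, hx, hmin⟩ := Finset.exists_min_image hfin.toFinset
    (fun x => (hfin.toFinset.filter (fun y => Relation.ReflTransGen G x y)).card)
    (by rwa [Set.Finite.toFinset_nonempty])
  refine ⟨x, hfin.mem_toFinset.1 hx, fun y hy hxy => ?_⟩
  by_contra hyx
  have hy' : y ∈ hfin.toFinset := hfin.mem_toFinset.2 hy
  have hsub : hfin.toFinset.filter (fun z => Relation.ReflTransGen G y z)
      ⊆ hfin.toFinset.filter (fun z => Relation.ReflTransGen G x z) := by
    intro z hz
    simp only [Finset.mem_filter] at hz ⊢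
    exact ⟨hz.1, hxy.trans hz.2⟩
  have hssub : hfin.toFinset.filter (fun z => Relation.ReflTransGen G y z)
      ⊂ hfin.toFinset.filter (fun z => Relation.ReflTransGen G x z) := by
    refine ⟨hsub, fun hcon => ?_⟩
    have hxmem : x ∈ hfin.toFinset.filter (fun z => Relation.ReflTransGen G x z) := by
      simp only [Finset.mem_filter]
      exact ⟨hx, Relation.ReflTransGen.refl⟩
    have := hcon hxmem
    simp only [Finset.mem_filter] at this
    exact hyx this.2
  have h1 := Finset.card_lt_card hssub
  have h2 := hmin y hy'
  omega

lemma localize {Q : Program V} {I J : Set V} (hfinI : I.Finite)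
    (hmodel : satProg I Q) (hJ : J ⊂ I) (hred : satRedProg I J Q) :
    ∃ J₂, J₂ ⊂ I ∧ satRedProg I J₂ Q ∧
      ∃ p₀, p₀ ∈ I \ J₂ ∧ ∀ p ∈ I \ J₂, mreach Q (Sum.inl p₀) (Sum.inl p) := by
  classical
  obtain ⟨x₀, hx₀, hx₀J⟩ := Set.exists_of_ssubset hJ
  have hXfin : ((Sum.inl '' (I \ J)) : Set (Vtx V)).Finite :=
    (hfinI.subset Set.diff_subset).image _
  have hXne : ((Sum.inl '' (I \ J)) : Set (Vtx V)).Nonempty := ⟨_, ⟨x₀, ⟨hx₀, hx₀J⟩, rfl⟩⟩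
  obtain ⟨x, hx, hminr⟩ := exists_min_reach hXfin hXne (arc Q)
  obtain ⟨p₀, hp₀, rfl⟩ := hx
  set S : Set V := {p | p ∈ I \ J ∧ Relation.ReflTransGen (arc Q) (Sum.inl p₀) (Sum.inl p)}
    with hSdef
  have hSsub : S ⊆ I := fun p hp => hp.1.1
  have hp₀S : p₀ ∈ S := ⟨hp₀, Relation.ReflTransGen.refl⟩
  have hJsub : J ⊆ I \ S := fun q hq => ⟨hJ.1 hq, fun hqS => hqS.1.2 hq⟩
  have hIdiff : ∀ p, p ∈ I \ (I \ S) → p ∈ S := by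
    intro p hp
    by_contra hpS
    exact hp.2 ⟨hp.1, hpS⟩
  refine ⟨I \ S, ⟨Set.diff_subset, fun hcon => (hcon (hSsub hp₀S)).2 hp₀S⟩, ?_, p₀,
    ⟨hSsub hp₀S, fun h => h.2 hp₀S⟩, ?_⟩
  · intro r hr hb hbr
    by_cases hhead : ∃ q ∈ r.head, q ∈ I \ S
    · exact hhead
    push_neg at hhead
    obtain ⟨a, ha, haI⟩ := hmodel r hr hb
    have haS : a ∈ S := by
      by_contra h
      exact (hhead a ha) ⟨haI, h⟩
    have hreach_a : Relation.ReflTransGen (arc Q) (Sum.inl p₀) (Sum.inl a) := haS.2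
    have hstep : satBodyRed I J r := by
      intro bl hbl
      have h2 := hbr bl hbl
      cases bl with
      | lit l =>
          cases l with
          | pos p =>
              show p ∈ J
              have hpJ₂ : p ∈ I \ S := h2
              by_contra hpJ
              have harc : arc Q (Sum.inl a) (Sum.inl p) :=
                Or.inl ⟨r, hr, ⟨a, rfl, ha⟩, Or.inl ⟨p, rfl, hbl⟩⟩
              exact hpJ₂.2 ⟨⟨hpJ₂.1, hpJ⟩, hreach_a.tail harc⟩
          | neg m => exact h2
      | agg A' =>
          by_contra h1
          obtain ⟨p, hp2, hp1, hcond⟩ := agg_red_step hJsub h2 h1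
          have harc1 : arc Q (Sum.inl a) (Sum.inr A') :=
            Or.inl ⟨r, hr, ⟨a, rfl, ha⟩, Or.inr ⟨A', rfl, hbl⟩⟩
          have harc2 : arc Q (Sum.inr A') (Sum.inl p) :=
            Or.inr ⟨A', p, rfl, rfl, ⟨r, hr, hbl⟩, hcond⟩
          exact hp2.2 ⟨⟨hp2.1, hp1⟩, (hreach_a.tail harc1).tail harc2⟩
    obtain ⟨q, hq, hqJ⟩ := hred r hr hb hstep
    exact absurd (hJsub hqJ) (hhead q hq)
  · intro p hp
    have hpS := hIdiff p hp
    refine ⟨hpS.2, ?_⟩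
    exact hminr _ ⟨p, hpS.1, rfl⟩ hpS.2

end Localize

/-! ### Group 6b: graph lemmas -/

section Graph
variable {V : Type} {aux : V} {pF : V → V} {P : Program V} {A : Agg V} {Vs : Set V}

lemma arcP_cond_of_var {B : Agg V} (hB : B ∈ varL A) {x : V}
    (h : 0 < wtL B (.pos x)) :
    (A.op = .gt ∧ 0 < wt A x) ∨ (A.op = .ne ∧ wt A x ≠ 0) := by
  rcases mem_varL hB with rfl | ⟨hop, rfl⟩
  · cases hop2 : A.op
    · exact Or.inl ⟨rfl, h⟩
    · exact Or.inr ⟨rfl, ne_of_gt h⟩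
  · rw [wtL_negA] at h
    refine Or.inr ⟨hop, fun h0 => ?_⟩
    have h1 : wtL A (.pos x) = 0 := h0
    rw [h1] at h
    simp at h

/-- backward graph lemma: anything reaching `aux` in the rewritten program either is
    a fresh vertex or reaches `A` in the original graph. -/
lemma graph_bwd (hauxP : aux ∉ atomsProg P) (hpFP : ∀ p, pF p ∉ atomsProg P)
    (hauxA : aux ∉ atomsAgg A) (hpFA : ∀ p, pF p ∉ atomsAgg A) (hpFaux : ∀ p, pF p ≠ aux)
    {u : Vtx V} (h : Relation.ReflTransGen (arc (rewProg aux pF P A Vs)) u (Sum.inl aux)) :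
    (u = Sum.inl aux ∨ (∃ q, u = Sum.inl (pF q)) ∨
      (∃ B ∈ varL A, u = Sum.inr (rewAgg pF Vs B) ∧ rewAgg pF Vs B ∉ AgOf P)) ∨
    Relation.ReflTransGen (arc P) u (Sum.inr A) := by
  induction h using Relation.ReflTransGen.head_induction_on with
  | refl => exact Or.inl (Or.inl rfl)
  | head harc hreach ih =>
    rcases harc with ⟨ρ, hρ, ⟨a, rfl, ha⟩, htgt⟩ | ⟨A', p, rfl, rfl, hA'R, hcond⟩
    · -- arc of the first kind out of an atom a
      rcases mem_rewProg.1 hρ with ⟨B, hB, hpos⟩ | ⟨r, hr, rfl⟩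
      · rcases mem_posGt.1 hpos with rfl | ⟨p, hp, hw, (rfl | rfl | rfl)⟩
        · -- rule (4)
          have haux : a = aux := by simpa using ha
          exact Or.inl (Or.inl (by rw [haux]))
        · -- rule (5): body has no positive literal and no aggregate
          exfalso
          rcases htgt with ⟨b, _, hbmem⟩ | ⟨A'', _, hamem⟩
          · simp at hbmem
          · simp at hamem
        · -- rule (6): head pF p
          have hpf : a = pF p := by simpa using ha
          exact Or.inl (Or.inr (Or.inl ⟨p, by rw [hpf]⟩))
        · -- rule (7): body has no positive literal and no aggregate
          exfalso
          rcases htgt with ⟨b, _, hbmem⟩ | ⟨A'', _, hamem⟩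
          · simp at hbmem
          · simp at hamem
      · -- a replaced rule
        rcases htgt with ⟨b, rfl, hbmem⟩ | ⟨A'', rfl, hamem⟩
        · simp only [replRule, List.mem_map] at hbmem
          obtain ⟨bl, hbl, hrepl⟩ := hbmem
          cases bl with
          | lit l =>
              have hl : l = .pos b := by
                have : BLit.lit l = BLit.lit (.pos b) := hrepl
                exact BLit.lit.inj this
              subst hl
              have harcP : arc P (Sum.inl a) (Sum.inl b) :=
                Or.inl ⟨r, hr, ⟨a, rfl, ha⟩, Or.inl ⟨b, rfl, hbl⟩⟩
              have hbP : b ∈ atomsProg P :=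
                body_atoms_subset hr hbl (show b ∈ atomsLit (Lit.pos b) from rfl)
              rcases ih with (hc | ⟨q, hq⟩ | ⟨B, _, heq, _⟩) | hreachP
              · exact absurd (Sum.inl.inj hc ▸ hbP) hauxP
              · exact absurd (Sum.inl.inj hq ▸ hbP) (hpFP q)
              · exact absurd heq (by simp)
              · exact Or.inr (hreachP.head harcP)
          | agg A₂ =>
              by_cases hA₂ : A₂ = A
              · subst hA₂
                exact Or.inr (Relation.ReflTransGen.single
                  (Or.inl ⟨r, hr, ⟨a, rfl, ha⟩, Or.inr ⟨A₂, rfl, hbl⟩⟩))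
              · exfalso
                have : BLit.agg A₂ = BLit.lit (.pos b) := by
                  rw [← hrepl]; simp [replB, hA₂]
                simp at this
        · simp only [replRule, List.mem_map] at hamem
          obtain ⟨bl, hbl, hrepl⟩ := hamem
          cases bl with
          | lit l => simp [replB] at hrepl
          | agg A₂ =>
              by_cases hA₂ : A₂ = A
              · subst hA₂; simp [replB] at hrepl
              · have hAe : A₂ = A'' := by
                  have : BLit.agg A₂ = BLit.agg A'' := by rw [← hrepl]; simp [replB, hA₂]
                  exact BLit.agg.inj this
                subst hAe
                have harcP : arc P (Sum.inl a) (Sum.inr A₂) :=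
                  Or.inl ⟨r, hr, ⟨a, rfl, ha⟩, Or.inr ⟨A₂, rfl, hbl⟩⟩
                rcases ih with (hc | ⟨q, hq⟩ | ⟨B, _, heq, hnP⟩) | hreachP
                · exact absurd hc (by simp)
                · exact absurd hq (by simp)
                · exact absurd ((Sum.inr.inj heq) ▸ (⟨r, hr, hbl⟩ : A₂ ∈ AgOf P)) hnP
                · exact Or.inr (hreachP.head harcP)
    · -- arc of the second kind out of an aggregate A'
      by_cases hP : A' ∈ AgOf P
      · have hwne : wt A' p ≠ 0 := by
          rcases hcond with ⟨_, hgt⟩ | ⟨_, hne0⟩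
          · exact ne_of_gt hgt
          · exact hne0
        have hpP : p ∈ atomsProg P := aggAtoms_subset hP (mem_atomsAgg_of_wt_ne hwne)
        have harcP : arc P (Sum.inr A') (Sum.inl p) := Or.inr ⟨A', p, rfl, rfl, hP, hcond⟩
        rcases ih with (hc | ⟨q, hq⟩ | ⟨B, _, heq, _⟩) | hreachP
        · exact absurd (Sum.inl.inj hc ▸ hpP) hauxP
        · exact absurd (Sum.inl.inj hq ▸ hpP) (hpFP q)
        · exact absurd heq (by simp)
        · exact Or.inr (hreachP.head harcP)
      · rcases AgOf_rewProg hA'R with ⟨B, hB, rfl⟩ | ⟨hA'P, _⟩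
        · exact Or.inl (Or.inr (Or.inr ⟨B, hB, rfl, hP⟩))
        · exact absurd hA'P hP

/-- forward graph lemma -/
lemma graph_fwd (hauxP : aux ∉ atomsProg P) (hpFP : ∀ p, pF p ∉ atomsProg P)
    (hauxA : aux ∉ atomsAgg A) (hpFA : ∀ p, pF p ∉ atomsAgg A) (hpFaux : ∀ p, pF p ≠ aux)
    (hAP : A ∈ AgOf P) {v : Vtx V}
    (h : Relation.ReflTransGen (arc (rewProg aux pF P A Vs)) (Sum.inl aux) v) :
    (v = Sum.inl aux ∨ (∃ q, v = Sum.inl (pF q)) ∨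
      (∃ B ∈ varL A, v = Sum.inr (rewAgg pF Vs B))) ∨
    Relation.ReflTransGen (arc P) (Sum.inr A) v := by
  induction h with
  | refl => exact Or.inl (Or.inl rfl)
  | tail hreach harc ih =>
    -- helper: arcs out of a rewritten aggregate
    have hrewarc : ∀ B ∈ varL A, ∀ x, arc (rewProg aux pF P A Vs)
        (Sum.inr (rewAgg pF Vs B)) x →
        (∃ q, x = Sum.inl (pF q)) ∨ Relation.ReflTransGen (arc P) (Sum.inr A) x := by
      intro B hB x harc'
      rcases harc' with ⟨ρ, hρ, ⟨a, ha, _⟩, _⟩ | ⟨A'', p, heq, rfl, hA''R, hcond⟩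
      · exact absurd ha (by simp)
      · have hAe : A'' = rewAgg pF Vs B := (Sum.inr.inj heq).symm
        subst hAe
        have hgt : 0 < wt (rewAgg pF Vs B) p := by
          rcases hcond with ⟨_, h⟩ | ⟨hop, _⟩
          · exact h
          · exact absurd (rewAgg_op (pF := pF) (Vs := Vs) B ▸ hop) (by simp)
        obtain ⟨l, hl, ht⟩ := wt_rew_ne_zero (ne_of_gt hgt)
        rcases tLit_shape hl ht with ⟨h0, rfl⟩ | ⟨_, p', hp', _, rfl⟩
        · exact Or.inr (Relation.ReflTransGen.single
            (Or.inr ⟨A, p, rfl, rfl, hAP, arcP_cond_of_var hB h0⟩))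
        · exact Or.inl ⟨p', rfl⟩
    rcases ih with (rfl | ⟨q, rfl⟩ | ⟨B, hB, rfl⟩) | hreachP
    · -- w' = inl aux
      rcases harc with ⟨ρ, hρ, ⟨a, heq, ha⟩, htgt⟩ | ⟨A', p, heq, _, _, _⟩
      swap
      · exact absurd heq (by simp)
      have haeq : a = aux := (Sum.inl.inj heq).symm
      rw [haeq] at ha
      clear heq haeq
      rcases mem_rewProg.1 hρ with ⟨B, hB, hpos⟩ | ⟨r, hr, rfl⟩
      · rcases mem_posGt.1 hpos with rfl | ⟨p, hp, hw, (rfl | rfl | rfl)⟩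
        · -- rule (4): target is the rewritten aggregate
          rcases htgt with ⟨b, _, hbmem⟩ | ⟨A'', rfl, hamem⟩
          · simp at hbmem
          · have : A'' = rewAgg pF Vs B := by simpa using hamem
            exact Or.inl (Or.inr (Or.inr ⟨B, hB, by rw [this]⟩))
        · exact absurd (Eq.symm (show aux = pF p by simpa using ha)) (hpFaux p)
        · exact absurd (Eq.symm (show aux = pF p by simpa using ha)) (hpFaux p)
        · -- rule (7): aux ∈ {p, pF p} impossible
          exfalso
          have hpA : p ∈ atomsAgg A :=
            (atomsAgg_var hB) ▸ mem_atomsAgg_of_wt_ne (ne_of_lt hw)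
          have ha' : aux = p ∨ aux = pF p := by simpa using ha
          rcases ha' with rfl | heq2
          · exact hauxA hpA
          · exact hpFaux p heq2.symm
      · exact absurd (head_subset_atoms hr ha) hauxP
    · -- w' = inl (pF q)
      rcases harc with ⟨ρ, hρ, ⟨a, heq, ha⟩, htgt⟩ | ⟨A', p, heq, _, _, _⟩
      swap
      · exact absurd heq (by simp)
      have haeq : a = pF q := (Sum.inl.inj heq).symm
      rw [haeq] at ha
      clear heq haeq
      rcases mem_rewProg.1 hρ with ⟨B, hB, hpos⟩ | ⟨r, hr, rfl⟩
      · rcases mem_posGt.1 hpos with rfl | ⟨p, hp, hw, (rfl | rfl | rfl)⟩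
        · exact absurd (by simpa using ha) (fun h => hpFaux q h)
        · -- rule (5): no arc targets
          exfalso
          rcases htgt with ⟨b, _, hbmem⟩ | ⟨A'', _, hamem⟩
          · simp at hbmem
          · simp at hamem
        · -- rule (6): target aux
          rcases htgt with ⟨b, rfl, hbmem⟩ | ⟨A'', _, hamem⟩
          · have : b = aux := by simpa using hbmem
            exact Or.inl (Or.inl (by rw [this]))
          · simp at hamem
        · exfalso
          rcases htgt with ⟨b, _, hbmem⟩ | ⟨A'', _, hamem⟩
          · simp at hbmem
          · simp at hamem
      · exact absurd (head_subset_atoms hr ha) (hpFP q)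
    · -- w' = inr (rewAgg B)
      rcases hrewarc B hB _ harc with ⟨q, hq⟩ | hr
      · exact Or.inl (Or.inr (Or.inl ⟨q, hq⟩))
      · exact Or.inr hr
    · -- reach_P A w'
      rcases harc with ⟨ρ, hρ, ⟨a, rfl, ha⟩, htgt⟩ | ⟨A', p, rfl, rfl, hA'R, hcond⟩
      · rcases mem_rewProg.1 hρ with ⟨B, hB, hpos⟩ | ⟨r, hr, rfl⟩
        · rcases mem_posGt.1 hpos with rfl | ⟨p, hp, hw, (rfl | rfl | rfl)⟩
          · -- rule (4): target rewritten aggregate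
            rcases htgt with ⟨b, _, hbmem⟩ | ⟨A'', rfl, hamem⟩
            · simp at hbmem
            · have : A'' = rewAgg pF Vs B := by simpa using hamem
              exact Or.inl (Or.inr (Or.inr ⟨B, hB, by rw [this]⟩))
          · exfalso
            rcases htgt with ⟨b, _, hbmem⟩ | ⟨A'', _, hamem⟩
            · simp at hbmem
            · simp at hamem
          · rcases htgt with ⟨b, rfl, hbmem⟩ | ⟨A'', _, hamem⟩
            · have : b = aux := by simpa using hbmem
              exact Or.inl (Or.inl (by rw [this]))
            · simp at hamem
          · exfalso
            rcases htgt with ⟨b, _, hbmem⟩ | ⟨A'', _, hamem⟩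
            · simp at hbmem
            · simp at hamem
        · -- replaced rule
          rcases htgt with ⟨b, rfl, hbmem⟩ | ⟨A'', rfl, hamem⟩
          · simp only [replRule, List.mem_map] at hbmem
            obtain ⟨bl, hbl, hrepl⟩ := hbmem
            cases bl with
            | lit l =>
                have hl : l = .pos b := by
                  have : BLit.lit l = BLit.lit (.pos b) := hrepl
                  exact BLit.lit.inj this
                subst hl
                exact Or.inr (hreachP.tail
                  (Or.inl ⟨r, hr, ⟨a, rfl, ha⟩, Or.inl ⟨b, rfl, hbl⟩⟩))
            | agg A₂ =>
                by_cases hA₂ : A₂ = A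
                · subst hA₂
                  have hb : b = aux := by
                    have : BLit.lit (Lit.pos aux) = BLit.lit (.pos b) := by
                      rw [← hrepl]; simp [replB]
                    exact (Lit.pos.inj (BLit.lit.inj this)).symm
                  exact Or.inl (Or.inl (by rw [hb]))
                · exfalso
                  have : BLit.agg A₂ = BLit.lit (.pos b) := by
                    rw [← hrepl]; simp [replB, hA₂]
                  simp at this
          · simp only [replRule, List.mem_map] at hamem
            obtain ⟨bl, hbl, hrepl⟩ := hamem
            cases bl with
            | lit l => simp [replB] at hrepl
            | agg A₂ =>
                by_cases hA₂ : A₂ = A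
                · subst hA₂; simp [replB] at hrepl
                · have hAe : A₂ = A'' := by
                    have : BLit.agg A₂ = BLit.agg A'' := by rw [← hrepl]; simp [replB, hA₂]
                    exact BLit.agg.inj this
                  subst hAe
                  exact Or.inr (hreachP.tail
                    (Or.inl ⟨r, hr, ⟨a, rfl, ha⟩, Or.inr ⟨A₂, rfl, hbl⟩⟩))
      · -- out of an aggregate
        by_cases hP : A' ∈ AgOf P
        · exact Or.inr (hreachP.tail (Or.inr ⟨A', p, rfl, rfl, hP, hcond⟩))
        · rcases AgOf_rewProg hA'R with ⟨B, hB, rfl⟩ | ⟨hA'P, _⟩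
          · rcases hrewarc B hB _ (Or.inr ⟨_, p, rfl, rfl, hA'R, hcond⟩) with ⟨q, hq⟩ | hr
            · exact Or.inl (Or.inr (Or.inl ⟨q, hq⟩))
            · exact Or.inr hr
          · exact absurd hA'P hP

end Graph

/-! ### Group 7: main comparison lemmas -/

section Core
variable {V : Type} {aux : V} {pF : V → V} {P : Program V} {A : Agg V} {Vs : Set V}

lemma satBody_single {I : Set V} {h : Finset V} {bl : BLit V} :
    satBody I ⟨h, [bl]⟩ ↔ satB I bl := by
  constructor
  · intro H; exact H bl (by simp)
  · intro hb bl' hbl'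
    simp only [List.mem_singleton] at hbl'
    subst hbl'; exact hb

lemma satBodyRed_single {I J : Set V} {h : Finset V} {bl : BLit V} :
    satBodyRed I J ⟨h, [bl]⟩ ↔ satBRed I J bl := by
  constructor
  · intro H; exact H bl (by simp)
  · intro hb bl' hbl'
    simp only [List.mem_singleton] at hbl'
    subst hbl'; exact hb

lemma PS_le {B : Agg V} {σ τ : Lit V → Prop}
    (h : ∀ l ∈ litsNZ B, 0 < wtL B l → τ l → σ l) : PS B τ ≤ PS B σ := by
  refine Finset.sum_le_sum_of_subset_of_nonneg ?_ ?_
  · intro l hl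
    simp only [Finset.mem_filter] at hl ⊢
    exact ⟨hl.1, hl.2.1, h l hl.1 hl.2.1 hl.2.2⟩
  · intro l hl _
    simp only [Finset.mem_filter] at hl
    exact le_of_lt hl.2.1

/-- Core inequality 1: the reduct of the rewritten aggregate dominates the
    reduct of the original one. -/
lemma rew_red_le {B : Agg V} (hB : B ∈ varL A) {E' J' I J : Set V}
    (hIE : ∀ q ∈ atomsAgg A, (q ∈ I ↔ q ∈ E'))
    (hJJ : ∀ q ∈ atomsAgg A, (q ∈ J ↔ q ∈ J'))
    (hpf1 : ∀ p, p ∈ Vs → wtL B (.pos p) < 0 → pF p ∉ J' → p ∈ J)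
    (hnv : ∀ p, p ∉ Vs → wtL B (.pos p) < 0 → p ∈ E' → p ∈ J) :
    aggSum B (satLitRed I J) ≤ PS B (satLitRed E' J')
      + NS B (fun l => ¬ satLitRed E' J' (tLit pF Vs B l)) := by
  have hAv : atomsAgg B = atomsAgg A := atomsAgg_var hB
  refine aggSum_le_rewSum ?_ ?_
  · intro l hl _
    have hatoms : atomsLit l ⊆ atomsAgg A :=
      hAv ▸ atomsLit_subset_of_mem (mem_litsNZ.1 hl).1
    exact satLitRed_congr (fun q hq => ⟨(hIE q (hatoms hq)).symm, (hJJ q (hatoms hq)).symm⟩)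
  · intro l hl hw hns
    have hatoms : atomsLit l ⊆ atomsAgg A :=
      hAv ▸ atomsLit_subset_of_mem (mem_litsNZ.1 hl).1
    have h0 : ¬ 0 < wtL B l := not_lt.2 (le_of_lt hw)
    cases l with
    | pos p =>
        by_cases hp : p ∈ Vs
        · rw [tLit_posVs h0 hp] at hns
          exact hpf1 p hp hw hns
        · rw [tLit_posNVs h0 hp] at hns
          have hpE : p ∈ E' := not_not.1 hns
          exact hnv p hp hw hpE
    | neg m =>
        rw [tLit_neg h0] at hns
        have hE : ¬ satLit E' m := fun h => hns (fun hc => hc h)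
        show ¬ satLit I m
        intro hm
        exact hE ((satLit_congr (I := I) (K := E') (l := m)
          (fun q hq => hIE q (hatoms hq))).1 hm)

/-- Core inequality 2: the other direction. -/
lemma le_rew_red {B : Agg V} (hB : B ∈ varL A) {E' J' I J : Set V}
    (hIE : ∀ q ∈ atomsAgg A, (q ∈ I ↔ q ∈ E'))
    (hJJ : ∀ q ∈ atomsAgg A, (q ∈ J ↔ q ∈ J'))
    (hpf2 : ∀ p, p ∈ Vs → wtL B (.pos p) < 0 → pF p ∈ J' → p ∉ J)
    (hnv2 : ∀ p, p ∉ Vs → wtL B (.pos p) < 0 → p ∈ J → p ∈ E') :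
    PS B (satLitRed E' J') + NS B (fun l => ¬ satLitRed E' J' (tLit pF Vs B l))
      ≤ aggSum B (satLitRed I J) := by
  have hAv : atomsAgg B = atomsAgg A := atomsAgg_var hB
  refine rewSum_le_aggSum ?_ ?_
  · intro l hl _
    have hatoms : atomsLit l ⊆ atomsAgg A :=
      hAv ▸ atomsLit_subset_of_mem (mem_litsNZ.1 hl).1
    exact satLitRed_congr (fun q hq => ⟨(hIE q (hatoms hq)).symm, (hJJ q (hatoms hq)).symm⟩)
  · intro l hl hw hτ
    have hatoms : atomsLit l ⊆ atomsAgg A :=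
      hAv ▸ atomsLit_subset_of_mem (mem_litsNZ.1 hl).1
    have h0 : ¬ 0 < wtL B l := not_lt.2 (le_of_lt hw)
    cases l with
    | pos p =>
        by_cases hp : p ∈ Vs
        · rw [tLit_posVs h0 hp]
          exact fun hc => hpf2 p hp hw hc hτ
        · rw [tLit_posNVs h0 hp]
          intro hc
          exact hc (hnv2 p hp hw hτ)
    | neg m =>
        rw [tLit_neg h0]
        intro hc
        have hEm : satLit E' m := not_not.1 hc
        have hIm : satLit I m :=
          (satLit_congr (I := I) (K := E') (l := m) (fun q hq => hIE q (hatoms hq))).2 hEm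
        exact hτ hIm

/-- Core inequality 3 (monotone version): positive parts compared across `J ⊆ E`. -/
lemma rew_red_le' {B : Agg V} (hB : B ∈ varL A) {E' I J : Set V}
    (hIE : ∀ q ∈ atomsAgg A, (q ∈ I ↔ q ∈ E'))
    (hJE : ∀ q ∈ atomsAgg A, q ∈ J → q ∈ E')
    (hpf1 : ∀ p, p ∈ Vs → wtL B (.pos p) < 0 → pF p ∉ E' → p ∈ J)
    (hnv : ∀ p, p ∉ Vs → wtL B (.pos p) < 0 → p ∈ E' → p ∈ J) :
    aggSum B (satLitRed I J) ≤ PS B (satLitRed E' E')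
      + NS B (fun l => ¬ satLitRed E' E' (tLit pF Vs B l)) := by
  have hAv : atomsAgg B = atomsAgg A := atomsAgg_var hB
  rw [aggSum_split]
  have h1 : PS B (satLitRed I J) ≤ PS B (satLitRed E' E') := by
    refine PS_le (fun l hl _ hτ => ?_)
    have hatoms : atomsLit l ⊆ atomsAgg A :=
      hAv ▸ atomsLit_subset_of_mem (mem_litsNZ.1 hl).1
    cases l with
    | pos p => exact hJE p (hatoms rfl) hτ
    | neg m =>
        show ¬ satLit E' m
        intro hm
        exact hτ ((satLit_congr (I := I) (K := E') (l := m) (fun q hq => hIE q (hatoms hq))).2 hm)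
  have h2 : NS B (satLitRed I J)
      ≤ NS B (fun l => ¬ satLitRed E' E' (tLit pF Vs B l)) := by
    refine NS_le (fun l hl hw hns => ?_)
    have hatoms : atomsLit l ⊆ atomsAgg A :=
      hAv ▸ atomsLit_subset_of_mem (mem_litsNZ.1 hl).1
    have h0 : ¬ 0 < wtL B l := not_lt.2 (le_of_lt hw)
    cases l with
    | pos p =>
        by_cases hp : p ∈ Vs
        · rw [tLit_posVs h0 hp] at hns
          exact hpf1 p hp hw hns
        · rw [tLit_posNVs h0 hp] at hns
          exact hnv p hp hw (not_not.1 hns)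
    | neg m =>
        rw [tLit_neg h0] at hns
        have hE : ¬ satLit E' m := fun h => hns (fun hc => hc h)
        show ¬ satLit I m
        intro hm
        exact hE ((satLit_congr (I := I) (K := E') (l := m)
          (fun q hq => hIE q (hatoms hq))).1 hm)
  linarith

lemma satAggRed_rew_iff {B : Agg V} {E' J' : Set V} :
    satAggRed E' J' (rewAgg pF Vs B) ↔
      B.b < PS B (satLitRed E' J')
        + NS B (fun l => ¬ satLitRed E' J' (tLit pF Vs B l)) :=
  satRew_iff B (satLitRed E' J')

lemma satAgg_rew_iff {B : Agg V} {E' : Set V} :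
    satAgg E' (rewAgg pF Vs B) ↔
      B.b < PS B (satLitRed E' E')
        + NS B (fun l => ¬ satLitRed E' E' (tLit pF Vs B l)) := by
  have h : satAgg E' (rewAgg pF Vs B) ↔ satAggRed E' E' (rewAgg pF Vs B) :=
    satAggRed_self.symm
  rw [h]; exact satRew_iff B _

lemma aggSum_red_self (B : Agg V) (I : Set V) :
    aggSum B (satLitRed I I) = aggSum B (satLit I) :=
  aggSum_congr (fun _ => satLitRed_self)

lemma extSet_self_pos {I : Set V} (h : satAgg I A) :
    extSet aux pF Vs A I I = I ∪ {aux} ∪ pF '' AtF aux pF Vs A := by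
  unfold extSet
  rw [if_neg (not_not.2 h), if_neg (not_not.2 (satAggRed_self.2 h))]

lemma extSet_self_neg {I : Set V} (h : ¬ satAgg I A) :
    extSet aux pF Vs A I I = I ∪ pF '' {p ∈ AtF aux pF Vs A | p ∉ I} :=
  if_pos h

lemma satAgg_iff_var' {I : Set V} :
    satAgg I A ↔ ∃ B ∈ varL A, B.b < aggSum B (satLit I) :=
  satAggWith_var A (satLit I)

lemma not_satAgg_iff_var' {I : Set V} :
    ¬ satAgg I A ↔ ∀ B ∈ varL A, aggSum B (satLit I) ≤ B.b :=
  not_satAggWith_var A (satLit I)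

lemma satAggRed_iff_var' {I J : Set V} :
    satAggRed I J A ↔ ∃ B ∈ varL A, B.b < aggSum B (satLitRed I J) :=
  satAggWith_var A (satLitRed I J)

lemma not_satAggRed_iff_var' {I J : Set V} :
    ¬ satAggRed I J A ↔ ∀ B ∈ varL A, aggSum B (satLitRed I J) ≤ B.b :=
  not_satAggWith_var A (satLitRed I J)

end Core

/-! ### Group 8: from stable models of the rewriting to stable models of P -/

section MainB
variable {V : Type} {aux : V} {pF : V → V} {P : Program V} {A : Agg V} {Vs : Set V}

theorem stableR_to_P (hauxP : aux ∉ atomsProg P) (hauxA : aux ∉ atomsAgg A)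
    (hpFP : ∀ p, pF p ∉ atomsProg P) (hpFA : ∀ p, pF p ∉ atomsAgg A)
    (hpFaux : ∀ p, pF p ≠ aux) (hpFinj : Function.Injective pF)
    {I' : Set V} (hI' : stable (rewProg aux pF P A Vs) I') :
    stable P (I' \ ({aux} ∪ pF '' AtF aux pF Vs A)) ∧
      I' = extSet aux pF Vs A (I' \ ({aux} ∪ pF '' AtF aux pF Vs A))
        (I' \ ({aux} ∪ pF '' AtF aux pF Vs A)) := by
  classical
  set Fr : Set V := {aux} ∪ pF '' AtF aux pF Vs A with hFr
  set I : Set V := I' \ Fr with hIdef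
  have horig_nf : ∀ q, (q ∈ atomsProg P ∨ q ∈ atomsAgg A) → q ∉ Fr := by
    rintro q hq (rfl | ⟨p, hp, rfl⟩)
    · rcases hq with h | h
      · exact hauxP h
      · exact hauxA h
    · rcases hq with h | h
      · exact hpFP p h
      · exact hpFA p h
  have horig : ∀ q, (q ∈ atomsProg P ∨ q ∈ atomsAgg A) → (q ∈ I ↔ q ∈ I') := by
    intro q hq
    exact ⟨fun h => h.1, fun h => ⟨h, horig_nf q hq⟩⟩
  have hsubR : I' ⊆ atomsProg (rewProg aux pF P A Vs) := stable_subset_atoms hI'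
  have hf3 : ∀ q, pF q ∈ I' → q ∈ AtF aux pF Vs A := by
    intro q hq
    rcases atomsProg_rewProg hpFinj (hsubR hq) with h | h | h | ⟨p, hp, heq⟩
    · exact absurd h (hpFP q)
    · exact absurd h (hpFA q)
    · exact absurd h (hpFaux q)
    · exact hpFinj heq ▸ hp
  have hauxI : aux ∉ I := fun h => h.2 (Or.inl rfl)
  have hpFI : ∀ p, pF p ∉ I := by
    intro p hp
    exact hp.2 (Or.inr ⟨p, hf3 p hp.1, rfl⟩)
  have hatf_atoms : AtF aux pF Vs A ⊆ atomsAgg A := AtF_subset_atomsAgg hpFinj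
  have hf5 : aux ∈ I' → ∀ p ∈ AtF aux pF Vs A, pF p ∈ I' := by
    intro haux p hp
    obtain ⟨B, hB, hpVs, hw⟩ := (mem_AtF hpFinj).1 hp
    have hrule : (⟨{pF p}, [BLit.lit (.pos aux)]⟩ : Rule V) ∈ rewProg aux pF P A Vs :=
      posGt_sub_rewProg hB (Or.inr ⟨p, hpVs, hw, Or.inr (Or.inl rfl)⟩)
    have := hI'.1 _ hrule (satBody_single.2 (show satB I' (BLit.lit (.pos aux)) from haux))
    simpa using this
  have hf7 : aux ∉ I' → ∀ q, pF q ∈ I' → q ∉ I' := by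
    intro haux q hpFq hqI'
    have hqAtF : q ∈ AtF aux pF Vs A := hf3 q hpFq
    have hqA : q ∈ atomsAgg A := hatf_atoms hqAtF
    refine absurd ?_ (hI'.2 (I' \ {pF q})
      ⟨Set.diff_subset, fun hcon => (hcon hpFq).2 rfl⟩)
    intro ρ hρ hb _
    obtain ⟨w, hw, hwI'⟩ := hI'.1 ρ hρ hb
    by_cases hwq : w = pF q
    · subst hwq
      rcases mem_rewProg.1 hρ with ⟨B, hB, hpos⟩ | ⟨r, hr, rfl⟩
      · rcases mem_posGt.1 hpos with rfl | ⟨p, hpVs, hwt, (rfl | rfl | rfl)⟩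
        · exact absurd (show pF q = aux by simpa using hw) (hpFaux q)
        · -- rule 5 for p with pF q = pF p, i.e. p = q; but its body needs q ∉ I'
          exfalso
          have h' : pF q = pF p := by simpa using hw
          have hpq : p = q := hpFinj h'.symm
          have h5 : ¬ satLit I' (.pos p) := satBody_single.1 hb
          exact h5 (show p ∈ I' by rw [hpq]; exact hqI')
        · exfalso
          have h6 : aux ∈ I' := satBody_single.1 hb
          exact haux h6
        · have hw' : pF q = p ∨ pF q = pF p := by simpa using hw
          rcases hw' with h | h
          · exfalso
            have hpA : p ∈ atomsAgg A := mem_atomsAgg_of_wt_ne (wtL_var_ne hB (ne_of_lt hwt))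
            rw [← h] at hpA
            exact hpFA q hpA
          · have hpq : p = q := hpFinj h.symm
            subst hpq
            refine ⟨p, by simp, hqI', ?_⟩
            simp only [Set.mem_singleton_iff]
            exact fun hc => hpFA p (hc ▸ hqA)
      · exact absurd (head_subset_atoms hr hw) (hpFP q)
    · exact ⟨w, hw, hwI', by simpa using hwq⟩
  have hf6 : ∀ q ∈ I', q ∈ atomsAgg A → q ∈ atomsProg P := by
    intro q hqI' hqA
    by_contra hqP
    have hqaux : q ≠ aux := fun h => hauxA (h ▸ hqA)
    have hqpF : ∀ p, q ≠ pF p := fun p h => hpFA p (h ▸ hqA)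
    refine absurd ?_ (hI'.2 (I' \ {q}) ⟨Set.diff_subset, fun hcon => (hcon hqI').2 rfl⟩)
    intro ρ hρ hb _
    obtain ⟨w, hw, hwI'⟩ := hI'.1 ρ hρ hb
    by_cases hwq : w = q
    · subst hwq
      rcases mem_rewProg.1 hρ with ⟨B, hB, hpos⟩ | ⟨r, hr, rfl⟩
      · rcases mem_posGt.1 hpos with rfl | ⟨p, hpVs, hwt, (rfl | rfl | rfl)⟩
        · exact absurd (show w = aux by simpa using hw) hqaux
        · exact absurd (show w = pF p by simpa using hw) (hqpF p)
        · exact absurd (show w = pF p by simpa using hw) (hqpF p)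
        · have hw' : w = p ∨ w = pF p := by simpa using hw
          rcases hw' with rfl | h
          · have haux : aux ∈ I' := not_not.1 (satBody_single.1 hb)
            have hpFwI' : pF w ∈ I' := hf5 haux w ((mem_AtF hpFinj).2 ⟨B, hB, hpVs, hwt⟩)
            refine ⟨pF w, by simp, hpFwI', ?_⟩
            simp only [Set.mem_singleton_iff]
            exact fun hc => (hqpF w) hc.symm
          · exact absurd h (hqpF p)
      · exact absurd (head_subset_atoms hr hw) hqP
    · exact ⟨w, hw, hwI', by simpa using hwq⟩
  have hnegchar : aux ∉ I' → ∀ p ∈ AtF aux pF Vs A, (pF p ∈ I' ↔ p ∉ I') := by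
    intro haux p hp
    constructor
    · exact hf7 haux p
    · intro hpI'
      obtain ⟨B, hB, hpVs, hw⟩ := (mem_AtF hpFinj).1 hp
      have hrule : (⟨{pF p}, [BLit.lit (.neg (.pos p))]⟩ : Rule V) ∈ rewProg aux pF P A Vs :=
        posGt_sub_rewProg hB (Or.inr ⟨p, hpVs, hw, Or.inl rfl⟩)
      have := hI'.1 _ hrule (satBody_single.2
        (show satB I' (BLit.lit (.neg (.pos p))) from hpI'))
      simpa using this
  have hdecomp_pos : aux ∈ I' → I' = I ∪ {aux} ∪ pF '' AtF aux pF Vs A := by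
    intro haux
    ext q
    constructor
    · intro hq
      by_cases hqF : q ∈ Fr
      · rcases hqF with h | h
        · exact Or.inl (Or.inr h)
        · exact Or.inr h
      · exact Or.inl (Or.inl ⟨hq, hqF⟩)
    · rintro ((h | h) | ⟨p, hp, rfl⟩)
      · exact h.1
      · exact (Set.mem_singleton_iff.1 h) ▸ haux
      · exact hf5 haux p hp
  have hdecomp_neg : aux ∉ I' → I' = I ∪ pF '' {p ∈ AtF aux pF Vs A | p ∉ I} := by
    intro haux
    ext q
    constructor
    · intro hq
      by_cases hqF : q ∈ Fr
      · rcases hqF with h | ⟨p, hp, rfl⟩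
        · exact absurd ((Set.mem_singleton_iff.1 h) ▸ hq) haux
        · refine Or.inr ⟨p, ⟨hp, fun hc => ?_⟩, rfl⟩
          exact hf7 haux p hq hc.1
      · exact Or.inl ⟨hq, hqF⟩
    · rintro (h | ⟨p, ⟨hp, hpI⟩, rfl⟩)
      · exact h.1
      · refine (hnegchar haux p hp).2 ?_
        intro hc
        exact hpI ⟨hc, horig_nf p (Or.inr (hatf_atoms hp))⟩
  have hIE : ∀ q ∈ atomsAgg A, (q ∈ I ↔ q ∈ I') := fun q hq => horig q (Or.inr hq)
  have hnRewF : aux ∉ I' → ∀ B ∈ varL A, ¬ satAgg I' (rewAgg pF Vs B) := by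
    intro haux B hB hsatRew
    have hrule : (⟨{aux}, [BLit.agg (rewAgg pF Vs B)]⟩ : Rule V) ∈ rewProg aux pF P A Vs :=
      posGt_sub_rewProg hB (Or.inl rfl)
    have := hI'.1 _ hrule (satBody_single.2 hsatRew)
    exact haux (by simpa using this)
  have hsatiff : aux ∈ I' ↔ satAgg I A := by
    constructor
    · intro haux
      by_contra hnsat
      set J : Set V := I ∪ pF '' {p ∈ AtF aux pF Vs A | p ∉ I} with hJdef
      have hJI' : J ⊆ I' := by
        rintro q (hq | ⟨p, ⟨hp, _⟩, rfl⟩)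
        · exact hq.1
        · exact hf5 haux p hp
      have hauxJ : aux ∉ J := by
        rintro (h | ⟨p, _, heq⟩)
        · exact hauxI h
        · exact hpFaux p heq
      refine absurd ?_ (hI'.2 J ⟨hJI', fun hcon => hauxJ (hcon haux)⟩)
      intro ρ hρ hb hbr
      rcases mem_rewProg.1 hρ with ⟨B, hB, hpos⟩ | ⟨r, hr, rfl⟩
      · rcases mem_posGt.1 hpos with rfl | ⟨p, hpVs, hwt, (rfl | rfl | rfl)⟩
        · exfalso
          have hag : satAggRed I' J (rewAgg pF Vs B) := satBodyRed_single.1 hbr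
          rw [satAggRed_rew_iff] at hag
          have hle := le_rew_red (Vs := Vs) hB (E' := I') (J' := J) (I := I) (J := I)
            hIE
            (fun q hq => ⟨fun h => Or.inl h, by
              rintro (h | ⟨p, _, heq⟩)
              · exact h
              · exact absurd (heq ▸ hq) (hpFA p)⟩)
            (fun p _ _ hpJ => by
              rcases hpJ with h | ⟨p', ⟨_, hp'I⟩, heq⟩
              · exact absurd h (hpFI p)
              · exact (hpFinj heq) ▸ hp'I)
            (fun p _ hwt h =>
              (hIE p (mem_atomsAgg_of_wt_ne (wtL_var_ne hB (ne_of_lt hwt)))).1 h)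
          rw [aggSum_red_self] at hle
          have hub := not_satAgg_iff_var'.1 hnsat B hB
          linarith
        · have h5 : ¬ satLit I' (.pos p) := satBody_single.1 hb
          have hpAtF : p ∈ AtF aux pF Vs A := (mem_AtF hpFinj).2 ⟨B, hB, hpVs, hwt⟩
          exact ⟨pF p, by simp, Or.inr ⟨p, ⟨hpAtF, fun h => h5 h.1⟩, rfl⟩⟩
        · exfalso
          have h6 : aux ∈ J := satBodyRed_single.1 hbr
          exact hauxJ h6
        · by_cases hpI : p ∈ I
          · exact ⟨p, by simp, Or.inl hpI⟩
          · exact ⟨pF p, by simp,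
              Or.inr ⟨p, ⟨(mem_AtF hpFinj).2 ⟨B, hB, hpVs, hwt⟩, hpI⟩, rfl⟩⟩
      · obtain ⟨w, hw, hwI'⟩ := hI'.1 _ hρ hb
        have hwP : w ∈ atomsProg P := head_subset_atoms hr hw
        exact ⟨w, hw, Or.inl ⟨hwI', horig_nf w (Or.inl hwP)⟩⟩
    · intro hsat
      by_contra haux
      obtain ⟨B, hB, hgt⟩ := satAgg_iff_var'.1 hsat
      refine hnRewF haux B hB ?_
      rw [satAgg_rew_iff]
      have hle := rew_red_le (Vs := Vs) hB (E' := I') (J' := I') (I := I) (J := I)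
        hIE hIE
        (fun p hpVs hwt hpFn => by
          have hpAtF : p ∈ AtF aux pF Vs A := (mem_AtF hpFinj).2 ⟨B, hB, hpVs, hwt⟩
          have hpI' : p ∈ I' := not_not.1 (fun hc => hpFn ((hnegchar haux p hpAtF).2 hc))
          exact (hIE p (hatf_atoms hpAtF)).2 hpI')
        (fun p _ hwt h => (hIE p (mem_atomsAgg_of_wt_ne (wtL_var_ne hB (ne_of_lt hwt)))).2 h)
      rw [aggSum_red_self] at hle
      linarith
  have hIsub : I ⊆ I' := Set.diff_subset
  have hdecomp : I' = extSet aux pF Vs A I I := by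
    by_cases hs : satAgg I A
    · rw [extSet_self_pos hs]
      exact hdecomp_pos (hsatiff.2 hs)
    · rw [extSet_self_neg hs]
      exact hdecomp_neg (fun h => hs (hsatiff.1 h))
  refine ⟨⟨?_, ?_⟩, hdecomp⟩
  · -- I is a classical model of P
    intro r hr hb
    have h1 := satBody_repl_fwd hr (fun q hq => horig q (Or.inl hq))
      (fun _ hs => hsatiff.2 hs) hb
    obtain ⟨w, hw, hwI'⟩ := hI'.1 _ (repl_sub_rewProg hr) h1
    exact ⟨w, hw, hwI', horig_nf w (Or.inl (head_subset_atoms hr hw))⟩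
  · -- minimality of I
    intro J hJss hred
    have hJI : J ⊆ I := hJss.1
    obtain ⟨x, hxI, hxJ⟩ := Set.exists_of_ssubset hJss
    by_cases hs : satAgg I A
    · have haux : aux ∈ I' := hsatiff.2 hs
      by_cases hared : satAggRed I J A
      · -- countermodel J ∪ {aux} ∪ pF''AtF of F(I', R)
        set J' : Set V := (J ∪ {aux}) ∪ pF '' AtF aux pF Vs A with hJ'def
        have hsub : J' ⊆ I' := by
          rintro q ((hq | hq) | ⟨p, hp, rfl⟩)
          · exact hIsub (hJI hq)
          · exact (Set.mem_singleton_iff.1 hq) ▸ haux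
          · exact hf5 haux p hp
        have hxJ' : x ∉ J' := by
          rintro ((hq | hq) | ⟨p, hp, heq⟩)
          · exact hxJ hq
          · exact hxI.2 (Or.inl hq)
          · exact hxI.2 (Or.inr ⟨p, hp, heq⟩)
        refine absurd ?_ (hI'.2 J' ⟨hsub, fun hcon => hxJ' (hcon hxI.1)⟩)
        intro ρ hρ hb hbr
        rcases mem_rewProg.1 hρ with ⟨B, hB, hpos⟩ | ⟨r, hr, rfl⟩
        · rcases mem_posGt.1 hpos with rfl | ⟨p, hpVs, hwt, (rfl | rfl | rfl)⟩
          · exact ⟨aux, by simp, Or.inl (Or.inr rfl)⟩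
          · exact ⟨pF p, by simp,
              Or.inr ⟨p, (mem_AtF hpFinj).2 ⟨B, hB, hpVs, hwt⟩, rfl⟩⟩
          · exact ⟨pF p, by simp,
              Or.inr ⟨p, (mem_AtF hpFinj).2 ⟨B, hB, hpVs, hwt⟩, rfl⟩⟩
          · exact ⟨pF p, by simp,
              Or.inr ⟨p, (mem_AtF hpFinj).2 ⟨B, hB, hpVs, hwt⟩, rfl⟩⟩
        · have hag2 : ∀ q ∈ atomsProg P, (q ∈ I ↔ q ∈ I') ∧ (q ∈ J ↔ q ∈ J') := by
            intro q hq
            refine ⟨horig q (Or.inl hq), ⟨fun h => Or.inl (Or.inl h), ?_⟩⟩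
            rintro ((h | h) | ⟨p, _, heq⟩)
            · exact h
            · exact absurd ((Set.mem_singleton_iff.1 h) ▸ hq) hauxP
            · exact absurd (heq ▸ hq) (hpFP p)
          have hb2 := satBody_repl_bwd hr (fun q hq => horig q (Or.inl hq))
            (fun _ _ => hs) hb
          have hbr2 := satBodyRed_repl_bwd hr hag2 (fun _ _ => hared) hbr
          obtain ⟨w, hw, hwJ⟩ := hred r hr hb2 hbr2
          exact ⟨w, hw, Or.inl (Or.inl hwJ)⟩
      · -- countermodel J ∪ pF''{p ∈ AtF | p ∉ J}
        set J' : Set V := J ∪ pF '' {p ∈ AtF aux pF Vs A | p ∉ J} with hJ'def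
        have hsub : J' ⊆ I' := by
          rintro q (hq | ⟨p, hp, rfl⟩)
          · exact hIsub (hJI hq)
          · exact hf5 haux p hp.1
        have hauxJ' : aux ∉ J' := by
          rintro (h | ⟨p, _, heq⟩)
          · exact hauxI (hJI h)
          · exact hpFaux p heq
        refine absurd ?_ (hI'.2 J' ⟨hsub, fun hcon => hauxJ' (hcon haux)⟩)
        intro ρ hρ hb hbr
        rcases mem_rewProg.1 hρ with ⟨B, hB, hpos⟩ | ⟨r, hr, rfl⟩
        · rcases mem_posGt.1 hpos with rfl | ⟨p, hpVs, hwt, (rfl | rfl | rfl)⟩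
          · exfalso
            have hag : satAggRed I' J' (rewAgg pF Vs B) := satBodyRed_single.1 hbr
            rw [satAggRed_rew_iff] at hag
            have hle := le_rew_red (Vs := Vs) hB (E' := I') (J' := J') (I := I) (J := J)
              hIE
              (fun q hq => ⟨fun h => Or.inl h, by
                rintro (h | ⟨p, _, heq⟩)
                · exact h
                · exact absurd (heq ▸ hq) (hpFA p)⟩)
              (fun p _ _ hpJ => by
                rcases hpJ with h | ⟨p', ⟨_, hp'J⟩, heq⟩
                · exact absurd (hJI h) (hpFI p)
                · exact (hpFinj heq) ▸ hp'J)
              (fun p _ _ h => hIsub (hJI h))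
            have hub := not_satAggRed_iff_var'.1 hared B hB
            linarith
          · have h5 : ¬ satLit I' (.pos p) := satBody_single.1 hb
            have hpJ : p ∉ J := fun h => h5 (hIsub (hJI h))
            exact ⟨pF p, by simp,
              Or.inr ⟨p, ⟨(mem_AtF hpFinj).2 ⟨B, hB, hpVs, hwt⟩, hpJ⟩, rfl⟩⟩
          · exfalso
            exact hauxJ' (satBodyRed_single.1 hbr)
          · by_cases hpJ : p ∈ J
            · exact ⟨p, by simp, Or.inl hpJ⟩
            · exact ⟨pF p, by simp,
                Or.inr ⟨p, ⟨(mem_AtF hpFinj).2 ⟨B, hB, hpVs, hwt⟩, hpJ⟩, rfl⟩⟩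
        · by_cases hAr : BLit.agg A ∈ r.body
          · exfalso
            have hmem : replB aux A (BLit.agg A) ∈ (replRule aux A r).body := by
              simp only [replRule, List.mem_map]
              exact ⟨BLit.agg A, hAr, rfl⟩
            have := hbr _ hmem
            rw [show replB aux A (BLit.agg A) = BLit.lit (.pos aux) by simp [replB]] at this
            exact hauxJ' this
          · have hag2 : ∀ q ∈ atomsProg P, (q ∈ I ↔ q ∈ I') ∧ (q ∈ J ↔ q ∈ J') := by
              intro q hq
              refine ⟨horig q (Or.inl hq), ⟨fun h => Or.inl h, ?_⟩⟩
              rintro (h | ⟨p, _, heq⟩)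
              · exact h
              · exact absurd (heq ▸ hq) (hpFP p)
            have hb2 := satBody_repl_bwd hr (fun q hq => horig q (Or.inl hq))
              (fun hmem _ => absurd hmem hAr) hb
            have hbr2 := satBodyRed_repl_bwd hr hag2 (fun hmem _ => absurd hmem hAr) hbr
            obtain ⟨w, hw, hwJ⟩ := hred r hr hb2 hbr2
            exact ⟨w, hw, Or.inl hwJ⟩
    · -- case ¬ satAgg I A
      have haux : aux ∉ I' := fun h => hs (hsatiff.1 h)
      set J' : Set V := J ∪ pF '' {p ∈ AtF aux pF Vs A | p ∉ I} with hJ'def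
      have hpFpart : ∀ p ∈ AtF aux pF Vs A, p ∉ I → pF p ∈ I' := by
        intro p hp hpI
        refine (hnegchar haux p hp).2 ?_
        exact fun hc => hpI ⟨hc, horig_nf p (Or.inr (hatf_atoms hp))⟩
      have hsub : J' ⊆ I' := by
        rintro q (hq | ⟨p, hp, rfl⟩)
        · exact hIsub (hJI hq)
        · exact hpFpart p hp.1 hp.2
      have hxJ' : x ∉ J' := by
        rintro (h | ⟨p, hp, heq⟩)
        · exact hxJ h
        · exact hxI.2 (Or.inr ⟨p, hp.1, heq⟩)
      refine absurd ?_ (hI'.2 J' ⟨hsub, fun hcon => hxJ' (hcon hxI.1)⟩)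
      intro ρ hρ hb hbr
      rcases mem_rewProg.1 hρ with ⟨B, hB, hpos⟩ | ⟨r, hr, rfl⟩
      · rcases mem_posGt.1 hpos with rfl | ⟨p, hpVs, hwt, (rfl | rfl | rfl)⟩
        · exact absurd (satBody_single.1 hb) (hnRewF haux B hB)
        · have h5 : ¬ satLit I' (.pos p) := satBody_single.1 hb
          have hpI : p ∉ I := fun h => h5 (hIsub h)
          exact ⟨pF p, by simp,
            Or.inr ⟨p, ⟨(mem_AtF hpFinj).2 ⟨B, hB, hpVs, hwt⟩, hpI⟩, rfl⟩⟩
        · exact absurd (satBody_single.1 hb) haux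
        · exact absurd (not_not.1 (satBody_single.1 hb)) haux
      · by_cases hAr : BLit.agg A ∈ r.body
        · exfalso
          have hmem : replB aux A (BLit.agg A) ∈ (replRule aux A r).body := by
            simp only [replRule, List.mem_map]
            exact ⟨BLit.agg A, hAr, rfl⟩
          have := hb _ hmem
          rw [show replB aux A (BLit.agg A) = BLit.lit (.pos aux) by simp [replB]] at this
          exact haux this
        · have hag2 : ∀ q ∈ atomsProg P, (q ∈ I ↔ q ∈ I') ∧ (q ∈ J ↔ q ∈ J') := by
            intro q hq
            refine ⟨horig q (Or.inl hq), ⟨fun h => Or.inl h, ?_⟩⟩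
            rintro (h | ⟨p, _, heq⟩)
            · exact h
            · exact absurd (heq ▸ hq) (hpFP p)
          have hb2 := satBody_repl_bwd hr (fun q hq => horig q (Or.inl hq))
            (fun hmem _ => absurd hmem hAr) hb
          have hbr2 := satBodyRed_repl_bwd hr hag2 (fun hmem _ => absurd hmem hAr) hbr
          obtain ⟨w, hw, hwJ⟩ := hred r hr hb2 hbr2
          exact ⟨w, hw, Or.inl hwJ⟩

end MainB

/-! ### Group 9: from stable models of P to stable models of the rewriting -/

section MainA
variable {V : Type} {aux : V} {pF : V → V} {P : Program V} {A : Agg V} {Vs : Set V}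

theorem stableP_to_R (hfin : P.Finite)
    (hauxP : aux ∉ atomsProg P) (hauxA : aux ∉ atomsAgg A)
    (hpFP : ∀ p, pF p ∉ atomsProg P) (hpFA : ∀ p, pF p ∉ atomsAgg A)
    (hpFaux : ∀ p, pF p ≠ aux) (hpFinj : Function.Injective pF)
    (hrec : recSet P A ⊆ Vs)
    {I : Set V} (hI : stable P I) :
    stable (rewProg aux pF P A Vs) (extSet aux pF Vs A I I) := by
  classical
  set Fr : Set V := {aux} ∪ pF '' AtF aux pF Vs A with hFr
  have hsubI : I ⊆ atomsProg P := stable_subset_atoms hI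
  have hatf_atoms : AtF aux pF Vs A ⊆ atomsAgg A := AtF_subset_atomsAgg hpFinj
  have horig_nf : ∀ q, (q ∈ atomsProg P ∨ q ∈ atomsAgg A) → q ∉ Fr := by
    rintro q hq (rfl | ⟨p, hp, rfl⟩)
    · rcases hq with h | h
      · exact hauxP h
      · exact hauxA h
    · rcases hq with h | h
      · exact hpFP p h
      · exact hpFA p h
  by_cases hs : satAgg I A
  · -- case I ⊨ A
    rw [extSet_self_pos hs]
    set E : Set V := I ∪ {aux} ∪ pF '' AtF aux pF Vs A with hEdef
    have hauxE : aux ∈ E := Or.inl (Or.inr rfl)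
    have horig : ∀ q, (q ∈ atomsProg P ∨ q ∈ atomsAgg A) → (q ∈ I ↔ q ∈ E) := by
      intro q hq
      constructor
      · exact fun h => Or.inl (Or.inl h)
      · rintro ((h | h) | ⟨p, hp, heq⟩)
        · exact h
        · exact absurd ((Set.mem_singleton_iff.1 h) ▸ hq) (by
            rintro (h' | h')
            · exact hauxP h'
            · exact hauxA h')
        · exact absurd (heq ▸ hq) (by
            rintro (h' | h')
            · exact hpFP p h'
            · exact hpFA p h')
    have hIE : ∀ q ∈ atomsAgg A, (q ∈ I ↔ q ∈ E) := fun q hq => horig q (Or.inr hq)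
    have hmodel : satProg E (rewProg aux pF P A Vs) := by
      intro ρ hρ hb
      rcases mem_rewProg.1 hρ with ⟨B, hB, hpos⟩ | ⟨r, hr, rfl⟩
      · rcases mem_posGt.1 hpos with rfl | ⟨p, hpVs, hwt, (rfl | rfl | rfl)⟩
        · exact ⟨aux, by simp, hauxE⟩
        · exact ⟨pF p, by simp, Or.inr ⟨p, (mem_AtF hpFinj).2 ⟨B, hB, hpVs, hwt⟩, rfl⟩⟩
        · exact ⟨pF p, by simp, Or.inr ⟨p, (mem_AtF hpFinj).2 ⟨B, hB, hpVs, hwt⟩, rfl⟩⟩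
        · exact ⟨pF p, by simp, Or.inr ⟨p, (mem_AtF hpFinj).2 ⟨B, hB, hpVs, hwt⟩, rfl⟩⟩
      · have hb2 := satBody_repl_bwd (aux := aux) (A := A) hr (fun q hq => horig q (Or.inl hq))
          (fun _ _ => hs) hb
        obtain ⟨w, hw, hwI⟩ := hI.1 r hr hb2
        exact ⟨w, hw, Or.inl (Or.inl hwI)⟩
    refine ⟨hmodel, ?_⟩
    intro J' hJ'ss hred'
    have hEfin : E.Finite :=
      (((atomsProg_finite hfin).subset hsubI).union (Set.finite_singleton aux)).union
        (((atomsAgg_finite A).subset hatf_atoms).image pF)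
    obtain ⟨J₂, hJ₂ss, hred₂, p₀, hp₀, hmr⟩ := localize hEfin hmodel hJ'ss hred'
    clear hred' hJ'ss
    have g1 : aux ∈ J₂ → ∀ p ∈ AtF aux pF Vs A, pF p ∈ J₂ := by
      intro haux p hp
      obtain ⟨B, hB, hpVs, hwt⟩ := (mem_AtF hpFinj).1 hp
      have hrule : (⟨{pF p}, [BLit.lit (.pos aux)]⟩ : Rule V) ∈ rewProg aux pF P A Vs :=
        posGt_sub_rewProg hB (Or.inr ⟨p, hpVs, hwt, Or.inr (Or.inl rfl)⟩)
      have := hred₂ _ hrule (satBody_single.2 (show satB E (BLit.lit (.pos aux)) from hauxE))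
        (satBodyRed_single.2 (show satBRed E J₂ (BLit.lit (.pos aux)) from haux))
      simpa using this
    have g2 : ∀ p ∈ AtF aux pF Vs A, p ∉ I → pF p ∈ J₂ := by
      intro p hp hpI
      obtain ⟨B, hB, hpVs, hwt⟩ := (mem_AtF hpFinj).1 hp
      have hrule : (⟨{pF p}, [BLit.lit (.neg (.pos p))]⟩ : Rule V) ∈ rewProg aux pF P A Vs :=
        posGt_sub_rewProg hB (Or.inr ⟨p, hpVs, hwt, Or.inl rfl⟩)
      have hpE : ¬ satLit E (.pos p) := fun hc => hpI ((horig p (Or.inr (hatf_atoms hp))).2 hc)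
      have := hred₂ _ hrule (satBody_single.2 hpE) (satBodyRed_single.2 hpE)
      simpa using this
    have g3 : ∀ p ∈ AtF aux pF Vs A, p ∈ J₂ ∨ pF p ∈ J₂ := by
      intro p hp
      obtain ⟨B, hB, hpVs, hwt⟩ := (mem_AtF hpFinj).1 hp
      have hrule : (⟨{p, pF p}, [BLit.lit (.neg (.neg (.pos aux)))]⟩ : Rule V)
          ∈ rewProg aux pF P A Vs :=
        posGt_sub_rewProg hB (Or.inr ⟨p, hpVs, hwt, Or.inr (Or.inr rfl)⟩)
      have hbE : satB E (BLit.lit (.neg (.neg (.pos aux)))) := fun hc => hc hauxE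
      have := hred₂ _ hrule (satBody_single.2 hbE)
        (satBodyRed_single.2 (show satBRed E J₂ (BLit.lit (.neg (.neg (.pos aux))))
          from fun hc => hc hauxE))
      simpa using this
    set J : Set V := J₂ \ Fr with hJdef
    have hJsubI : J ⊆ I := by
      intro q hq
      rcases hJ₂ss.1 hq.1 with (h | h) | ⟨p, hp, heq⟩
      · exact h
      · exact absurd (Or.inl h) hq.2
      · exact absurd (Or.inr ⟨p, hp, heq⟩) hq.2
    have horigJ : ∀ q, (q ∈ atomsProg P ∨ q ∈ atomsAgg A) → (q ∈ J ↔ q ∈ J₂) :=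
      fun q hq => ⟨fun h => h.1, fun h => ⟨h, horig_nf q hq⟩⟩
    by_cases haux2 : aux ∈ J₂
    · have hredIJ : satRedProg I J P := by
        intro r hr hb2 hbr2
        have hbE := satBody_repl_fwd (aux := aux) (A := A) hr (fun q hq => horig q (Or.inl hq))
          (fun _ _ => hauxE) hb2
        have hbrE := satBodyRed_repl_fwd (aux := aux) (A := A) hr
          (fun q hq => ⟨horig q (Or.inl hq), horigJ q (Or.inl hq)⟩)
          (fun _ _ => haux2) hbr2
        obtain ⟨w, hw, hwJ₂⟩ := hred₂ _ (repl_sub_rewProg hr) hbE hbrE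
        exact ⟨w, hw, hwJ₂, horig_nf w (Or.inl (head_subset_atoms hr hw))⟩
      by_cases hJI : J = I
      · refine absurd ?_ hJ₂ss.2
        rintro q ((h | h) | ⟨p, hp, rfl⟩)
        · rw [← hJI] at h; exact h.1
        · exact (Set.mem_singleton_iff.1 h) ▸ haux2
        · exact g1 haux2 p hp
      · exact hI.2 J ⟨hJsubI, fun hcon => hJI (Set.Subset.antisymm hJsubI hcon)⟩ hredIJ
    · -- aux ∉ J₂
      have hpf1g : ∀ p ∈ AtF aux pF Vs A, pF p ∉ J₂ → p ∈ J := by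
        intro p hp hpFn
        have hpJ₂ : p ∈ J₂ := (g3 p hp).resolve_right hpFn
        exact ⟨hpJ₂, horig_nf p (Or.inr (hatf_atoms hp))⟩
      by_cases hJI : J = I
      · -- rule (4) fires, contradiction with aux ∉ J₂
        obtain ⟨B, hB, hgt⟩ := satAgg_iff_var'.1 hs
        have hrule : (⟨{aux}, [BLit.agg (rewAgg pF Vs B)]⟩ : Rule V)
            ∈ rewProg aux pF P A Vs := posGt_sub_rewProg hB (Or.inl rfl)
        have hbody4 : satAgg E (rewAgg pF Vs B) := by
          rw [satAgg_rew_iff]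
          have hle := rew_red_le (Vs := Vs) hB (E' := E) (J' := E) (I := I) (J := I)
            hIE hIE
            (fun p hpVs hwt hpFn =>
              absurd (Or.inr ⟨p, (mem_AtF hpFinj).2 ⟨B, hB, hpVs, hwt⟩, rfl⟩) hpFn)
            (fun p _ hwt h =>
              (hIE p (mem_atomsAgg_of_wt_ne (wtL_var_ne hB (ne_of_lt hwt)))).2 h)
          rw [aggSum_red_self] at hle
          linarith
        have hred4 : satAggRed E J₂ (rewAgg pF Vs B) := by
          rw [satAggRed_rew_iff]
          have hle := rew_red_le (Vs := Vs) hB (E' := E) (J' := J₂) (I := I) (J := I)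
            hIE
            (fun q hq => by rw [← hJI]; exact horigJ q (Or.inr hq))
            (fun p hpVs hwt hpFn => by
              rw [← hJI]
              exact hpf1g p ((mem_AtF hpFinj).2 ⟨B, hB, hpVs, hwt⟩) hpFn)
            (fun p _ hwt h =>
              (hIE p (mem_atomsAgg_of_wt_ne (wtL_var_ne hB (ne_of_lt hwt)))).2 h)
          rw [aggSum_red_self] at hle
          linarith
        have := hred₂ _ hrule (satBody_single.2 hbody4) (satBodyRed_single.2 hred4)
        exact absurd (by simpa using this) haux2
      · have hJssI : J ⊂ I := ⟨hJsubI, fun hcon => hJI (Set.Subset.antisymm hJsubI hcon)⟩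
        have hredIJ : satRedProg I J P := by
          intro r hr hb2 hbr2
          by_cases hAr : BLit.agg A ∈ r.body
          · exfalso
            have hAP : A ∈ AgOf P := ⟨r, hr, hAr⟩
            have hGF : ∀ p, p ∈ I → p ∉ J → p ∈ Vs := by
              intro p hpI hpJ
              have hpE : p ∈ E := Or.inl (Or.inl hpI)
              have hpJ₂ : p ∉ J₂ := fun hc => hpJ ⟨hc, horig_nf p (Or.inl (hsubI hpI))⟩
              have hmr1 := hmr _ ⟨hpE, hpJ₂⟩
              have hmrA := hmr _ ⟨hauxE, haux2⟩
              have hfw : Relation.ReflTransGen (arc (rewProg aux pF P A Vs))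
                  (Sum.inl aux) (Sum.inl p) := hmrA.2.trans hmr1.1
              have hbw : Relation.ReflTransGen (arc (rewProg aux pF P A Vs))
                  (Sum.inl p) (Sum.inl aux) := hmr1.2.trans hmrA.1
              have hp_atoms : p ∈ atomsProg P := hsubI hpI
              have h1 : Relation.ReflTransGen (arc P) (Sum.inr A) (Sum.inl p) := by
                rcases graph_fwd hauxP hpFP hauxA hpFA hpFaux hAP hfw with
                  (hc | ⟨q, hq⟩ | ⟨B', _, hq⟩) | h
                · exact absurd ((Sum.inl.inj hc) ▸ hp_atoms) hauxP
                · exact absurd ((Sum.inl.inj hq) ▸ hp_atoms) (hpFP q)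
                · exact absurd hq (by simp)
                · exact h
              have h2 : Relation.ReflTransGen (arc P) (Sum.inl p) (Sum.inr A) := by
                rcases graph_bwd hauxP hpFP hauxA hpFA hpFaux hbw with
                  (hc | ⟨q, hq⟩ | ⟨B', _, hq, _⟩) | h
                · exact absurd ((Sum.inl.inj hc) ▸ hp_atoms) hauxP
                · exact absurd ((Sum.inl.inj hq) ▸ hp_atoms) (hpFP q)
                · exact absurd hq (by simp)
                · exact h
              exact hrec ⟨hAP, h1, h2⟩
            have hnred : ¬ satAggRed I J A := by
              rw [not_satAggRed_iff_var']
              intro B hB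
              have h4B : ¬ (satAgg E (rewAgg pF Vs B)) ∨
                  ¬ satAggRed E J₂ (rewAgg pF Vs B) := by
                by_contra hc
                push_neg at hc
                have hrule : (⟨{aux}, [BLit.agg (rewAgg pF Vs B)]⟩ : Rule V)
                    ∈ rewProg aux pF P A Vs := posGt_sub_rewProg hB (Or.inl rfl)
                have := hred₂ _ hrule (satBody_single.2 hc.1) (satBodyRed_single.2 hc.2)
                exact haux2 (by simpa using this)
              have hnvJ : ∀ p, p ∉ Vs → wtL B (.pos p) < 0 → p ∈ E → p ∈ J := by
                intro p hpVs hwt hpE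
                by_contra hpJ
                have hpI : p ∈ I :=
                  (hIE p (mem_atomsAgg_of_wt_ne (wtL_var_ne hB (ne_of_lt hwt)))).2 hpE
                exact hpVs (hGF p hpI hpJ)
              rcases h4B with hc | hc
              · have hle := rew_red_le' (Vs := Vs) hB (E' := E) (I := I) (J := J)
                  hIE
                  (fun q _ h => Or.inl (Or.inl (hJsubI h)))
                  (fun p hpVs hwt hpFn =>
                    absurd (Or.inr ⟨p, (mem_AtF hpFinj).2 ⟨B, hB, hpVs, hwt⟩, rfl⟩) hpFn)
                  hnvJ
                rw [satAgg_rew_iff, not_lt] at hc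
                linarith
              · have hle := rew_red_le (Vs := Vs) hB (E' := E) (J' := J₂) (I := I) (J := J)
                  hIE
                  (fun q hq => horigJ q (Or.inr hq))
                  (fun p hpVs hwt hpFn =>
                    hpf1g p ((mem_AtF hpFinj).2 ⟨B, hB, hpVs, hwt⟩) hpFn)
                  hnvJ
                rw [satAggRed_rew_iff, not_lt] at hc
                linarith
            exact hnred (hbr2 _ hAr)
          · have hbE := satBody_repl_fwd (aux := aux) (A := A) hr (fun q hq => horig q (Or.inl hq))
              (fun hmem _ => absurd hmem hAr) hb2
            have hbrE := satBodyRed_repl_fwd (aux := aux) (A := A) hr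
              (fun q hq => ⟨horig q (Or.inl hq), horigJ q (Or.inl hq)⟩)
              (fun hmem _ => absurd hmem hAr) hbr2
            obtain ⟨w, hw, hwJ₂⟩ := hred₂ _ (repl_sub_rewProg hr) hbE hbrE
            exact ⟨w, hw, hwJ₂, horig_nf w (Or.inl (head_subset_atoms hr hw))⟩
        exact hI.2 J hJssI hredIJ
  · -- case I ⊭ A
    rw [extSet_self_neg hs]
    set E : Set V := I ∪ pF '' {p ∈ AtF aux pF Vs A | p ∉ I} with hEdef
    have hauxE : aux ∉ E := by
      rintro (h | ⟨p, _, heq⟩)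
      · exact hauxP (hsubI h)
      · exact hpFaux p heq
    have horig : ∀ q, (q ∈ atomsProg P ∨ q ∈ atomsAgg A) → (q ∈ I ↔ q ∈ E) := by
      intro q hq
      constructor
      · exact fun h => Or.inl h
      · rintro (h | ⟨p, hp, heq⟩)
        · exact h
        · exact absurd (heq ▸ hq) (by
            rintro (h' | h')
            · exact hpFP p h'
            · exact hpFA p h')
    have hIE : ∀ q ∈ atomsAgg A, (q ∈ I ↔ q ∈ E) := fun q hq => horig q (Or.inr hq)
    have hpFnotI : ∀ p, pF p ∉ I := fun p h => hpFP p (hsubI h)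
    have hnRewE : ∀ B ∈ varL A, ¬ satAgg E (rewAgg pF Vs B) := by
      intro B hB
      rw [satAgg_rew_iff, not_lt]
      have hle := le_rew_red (Vs := Vs) hB (E' := E) (J' := E) (I := I) (J := I)
        hIE hIE
        (fun p _ _ hpE => by
          rcases hpE with h | ⟨p', ⟨_, hp'I⟩, heq⟩
          · exact absurd h (hpFnotI p)
          · exact (hpFinj heq) ▸ hp'I)
        (fun p _ hwt h =>
          (hIE p (mem_atomsAgg_of_wt_ne (wtL_var_ne hB (ne_of_lt hwt)))).1 h)
      rw [aggSum_red_self] at hle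
      have hub := not_satAgg_iff_var'.1 hs B hB
      linarith
    have hmodel : satProg E (rewProg aux pF P A Vs) := by
      intro ρ hρ hb
      rcases mem_rewProg.1 hρ with ⟨B, hB, hpos⟩ | ⟨r, hr, rfl⟩
      · rcases mem_posGt.1 hpos with rfl | ⟨p, hpVs, hwt, (rfl | rfl | rfl)⟩
        · exact absurd (satBody_single.1 hb) (hnRewE B hB)
        · have h5 : ¬ satLit E (.pos p) := satBody_single.1 hb
          have hpI : p ∉ I := fun h => h5 (Or.inl h)
          exact ⟨pF p, by simp,
            Or.inr ⟨p, ⟨(mem_AtF hpFinj).2 ⟨B, hB, hpVs, hwt⟩, hpI⟩, rfl⟩⟩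
        · exact absurd (satBody_single.1 hb) hauxE
        · exact absurd (not_not.1 (satBody_single.1 hb)) hauxE
      · have hb2 := satBody_repl_bwd (aux := aux) (A := A) hr (fun q hq => horig q (Or.inl hq))
          (fun _ h => absurd h hauxE) hb
        obtain ⟨w, hw, hwI⟩ := hI.1 r hr hb2
        exact ⟨w, hw, Or.inl hwI⟩
    refine ⟨hmodel, ?_⟩
    intro J' hJ'ss hred'
    have g2' : ∀ p ∈ AtF aux pF Vs A, p ∉ I → pF p ∈ J' := by
      intro p hp hpI
      obtain ⟨B, hB, hpVs, hwt⟩ := (mem_AtF hpFinj).1 hp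
      have hrule : (⟨{pF p}, [BLit.lit (.neg (.pos p))]⟩ : Rule V) ∈ rewProg aux pF P A Vs :=
        posGt_sub_rewProg hB (Or.inr ⟨p, hpVs, hwt, Or.inl rfl⟩)
      have hpE : ¬ satLit E (.pos p) := fun hc => hpI ((horig p (Or.inr (hatf_atoms hp))).2 hc)
      have := hred' _ hrule (satBody_single.2 hpE) (satBodyRed_single.2 hpE)
      simpa using this
    set J : Set V := J' \ Fr with hJdef
    have hJsubI : J ⊆ I := by
      intro q hq
      rcases hJ'ss.1 hq.1 with h | ⟨p, hp, heq⟩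
      · exact h
      · exact absurd (Or.inr ⟨p, hp.1, heq⟩) hq.2
    have horigJ : ∀ q, (q ∈ atomsProg P ∨ q ∈ atomsAgg A) → (q ∈ J ↔ q ∈ J') :=
      fun q hq => ⟨fun h => h.1, fun h => ⟨h, horig_nf q hq⟩⟩
    obtain ⟨x, hxE, hxJ'⟩ := Set.exists_of_ssubset hJ'ss
    have hxI : x ∈ I := by
      rcases hxE with h | ⟨p, hp, heq⟩
      · exact h
      · exact absurd (heq ▸ g2' p hp.1 hp.2) hxJ'
    have hJss : J ⊂ I := by
      refine ⟨hJsubI, fun hcon => ?_⟩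
      have : x ∈ J := hcon hxI
      exact hxJ' this.1
    have hredIJ : satRedProg I J P := by
      intro r hr hb2 hbr2
      by_cases hAr : BLit.agg A ∈ r.body
      · exact absurd (hb2 _ hAr) hs
      · have hbE := satBody_repl_fwd (aux := aux) (A := A) hr (fun q hq => horig q (Or.inl hq))
          (fun hmem _ => absurd hmem hAr) hb2
        have hbrE := satBodyRed_repl_fwd (aux := aux) (A := A) hr
          (fun q hq => ⟨horig q (Or.inl hq), horigJ q (Or.inl hq)⟩)
          (fun hmem _ => absurd hmem hAr) hbr2
        obtain ⟨w, hw, hwJ'⟩ := hred' _ (repl_sub_rewProg hr) hbE hbrE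
        exact ⟨w, hw, hwJ', horig_nf w (Or.inl (head_subset_atoms hr hw))⟩
    exact hI.2 J hJss hredIJ

end MainA

/-! ### The main theorem -/


/-- Faithfulness of the aggregate rewriting (Theorem 1):
    for a program `Π`, an aggregate `A` (with `⊙ ∈ {>,≠}`) and a set of atoms
    `V ⊇ rec(Π,A)`, with `aux` and the `p^F` fresh pairwise-distinct atoms,
    `Π ≡_{At(Π)} rew(Π,A,V)`: each stable model `I` of `Π` corresponds to the
    unique stable model `ext(I,I)` of `rew(Π,A,V)`; the two programs have
    equally many stable models, and the restrictions of their stable models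
    to `At(Π)` coincide. -/
theorem rewriting_faithful (aux : V) (pF : V → V) (P : Program V) (A : Agg V)
    (Vs : Set V) (hfin : P.Finite)
    (hauxP : aux ∉ atomsProg P) (hauxA : aux ∉ atomsAgg A)
    (hpFP : ∀ p, pF p ∉ atomsProg P) (hpFA : ∀ p, pF p ∉ atomsAgg A)
    (hpFaux : ∀ p, pF p ≠ aux) (hpFinj : Function.Injective pF)
    (hrec : recSet P A ⊆ Vs) :
    (∀ I : Set V, stable P I →
        stable (rewProg aux pF P A Vs) (extSet aux pF Vs A I I) ∧
        ∀ I' : Set V, stable (rewProg aux pF P A Vs) I' →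
          I' \ ({aux} ∪ pF '' AtF aux pF Vs A) = I →
          I' = extSet aux pF Vs A I I) ∧
    (∀ I' : Set V, stable (rewProg aux pF P A Vs) I' →
        stable P (I' \ ({aux} ∪ pF '' AtF aux pF Vs A))) ∧
    Nonempty ({I : Set V // stable P I} ≃
              {I' : Set V // stable (rewProg aux pF P A Vs) I'}) ∧
    {S : Set V | ∃ I, stable P I ∧ S = I ∩ atomsProg P} =
      {S : Set V | ∃ I', stable (rewProg aux pF P A Vs) I' ∧
        S = I' ∩ atomsProg P} := by
  classical
  have hA : ∀ I : Set V, stable P I →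
      stable (rewProg aux pF P A Vs) (extSet aux pF Vs A I I) :=
    fun I hI => stableP_to_R hfin hauxP hauxA hpFP hpFA hpFaux hpFinj hrec hI
  have hB : ∀ I' : Set V, stable (rewProg aux pF P A Vs) I' →
      stable P (I' \ ({aux} ∪ pF '' AtF aux pF Vs A)) ∧
        I' = extSet aux pF Vs A (I' \ ({aux} ∪ pF '' AtF aux pF Vs A))
          (I' \ ({aux} ∪ pF '' AtF aux pF Vs A)) :=
    fun I' hI' => stableR_to_P hauxP hauxA hpFP hpFA hpFaux hpFinj hI'
  have hatf_atoms : AtF aux pF Vs A ⊆ atomsAgg A := AtF_subset_atomsAgg hpFinj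
  have hInF : ∀ I : Set V, stable P I → ∀ q ∈ I,
      q ∉ ({aux} ∪ pF '' AtF aux pF Vs A : Set V) := by
    intro I hI q hq
    rintro (h | ⟨p, _, heq⟩)
    · exact hauxP ((Set.mem_singleton_iff.1 h) ▸ stable_subset_atoms hI hq)
    · exact hpFP p (heq ▸ stable_subset_atoms hI hq)
  have hback : ∀ I : Set V, stable P I →
      extSet aux pF Vs A I I \ ({aux} ∪ pF '' AtF aux pF Vs A) = I := by
    intro I hI
    ext q
    constructor
    · intro hq
      by_cases hs : satAgg I A
      · rw [extSet_self_pos hs] at hq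
        rcases hq.1 with (h | h) | ⟨p, hp, heq⟩
        · exact h
        · exact absurd (Or.inl h) hq.2
        · exact absurd (Or.inr ⟨p, hp, heq⟩) hq.2
      · rw [extSet_self_neg hs] at hq
        rcases hq.1 with h | ⟨p, hp, heq⟩
        · exact h
        · exact absurd (Or.inr ⟨p, hp.1, heq⟩) hq.2
    · intro hq
      refine ⟨?_, hInF I hI q hq⟩
      by_cases hs : satAgg I A
      · rw [extSet_self_pos hs]; exact Or.inl (Or.inl hq)
      · rw [extSet_self_neg hs]; exact Or.inl hq
  have hext_atoms : ∀ I : Set V, stable P I →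
      extSet aux pF Vs A I I ∩ atomsProg P = I ∩ atomsProg P := by
    intro I hI
    ext q
    constructor
    · rintro ⟨hq1, hq2⟩
      refine ⟨?_, hq2⟩
      by_cases hs : satAgg I A
      · rw [extSet_self_pos hs] at hq1
        rcases hq1 with (h | h) | ⟨p, _, heq⟩
        · exact h
        · exact absurd ((Set.mem_singleton_iff.1 h) ▸ hq2) hauxP
        · exact absurd (heq ▸ hq2) (hpFP p)
      · rw [extSet_self_neg hs] at hq1
        rcases hq1 with h | ⟨p, _, heq⟩
        · exact h
        · exact absurd (heq ▸ hq2) (hpFP p)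
    · rintro ⟨hq1, hq2⟩
      refine ⟨?_, hq2⟩
      by_cases hs : satAgg I A
      · rw [extSet_self_pos hs]; exact Or.inl (Or.inl hq1)
      · rw [extSet_self_neg hs]; exact Or.inl hq1
  refine ⟨?_, fun I' hI' => (hB I' hI').1, ?_, ?_⟩
  · intro I hI
    refine ⟨hA I hI, ?_⟩
    intro I' hI' heq
    have h2 := (hB I' hI').2
    rw [heq] at h2
    exact h2
  · exact ⟨{
      toFun := fun x => ⟨extSet aux pF Vs A x.1 x.1, hA x.1 x.2⟩,
      invFun := fun y => ⟨y.1 \ ({aux} ∪ pF '' AtF aux pF Vs A), (hB y.1 y.2).1⟩,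
      left_inv := fun x => Subtype.ext (hback x.1 x.2),
      right_inv := fun y => by
        apply Subtype.ext
        have h2 := (hB y.1 y.2).2
        exact h2.symm }⟩
  · ext S
    simp only [Set.mem_setOf_eq]
    constructor
    · rintro ⟨I, hI, rfl⟩
      exact ⟨extSet aux pF Vs A I I, hA I hI, (hext_atoms I hI).symm⟩
    · rintro ⟨I', hI', rfl⟩
      refine ⟨I' \ ({aux} ∪ pF '' AtF aux pF Vs A), (hB I' hI').1, ?_⟩
      ext q
      constructor
      · rintro ⟨hq1, hq2⟩
        refine ⟨⟨hq1, ?_⟩, hq2⟩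
        rintro (h | ⟨p, _, heq⟩)
        · exact hauxP ((Set.mem_singleton_iff.1 h) ▸ hq2)
        · exact hpFP p (heq ▸ hq2)
      · rintro ⟨hq1, hq2⟩
        exact ⟨hq1.1, hq2⟩
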